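/- arXiv:2507.06982 — 5 statements merged into one kernel-verified Lean document; each statement's English description precedes it below -/
import Mathlib

section
/- Under the standing setup (Assumption 1), problem (P) has at least one solution, i.e., there exists u* ∈ U feasible for (P) that minimizes F(u) + ψ(u) over all feasible points. -/
open MeasureTheory Filter Topology TopologicalSpace
open scoped ENNReal

noncomputable section

/-- Weak-star convergence of a sequence in the dual `U = X*` of a Banach space `X`. -/
def WSTendsto {X : Type*} [NormedAddCommGroup X] [NormedSpace ℝ X]
    (u : ℕ → StrongDual ℝ X) (u₀ : StrongDual ℝ X) : Prop :=
  ∀ x : X, Tendsto (fun n => u n x) atTop (𝓝 (u₀ x))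

open Classical in
/-- The `[0,∞]`-valued indicator function `I_C` of a set: `0` on `C` and `∞` off `C`. -/
def iInd {α : Type*} (C : Set α) (a : α) : ℝ≥0∞ := if a ∈ C then 0 else ⊤

/-- Assumption 1 (standing setup): `U := StrongDual ℝ X` is the dual of the real
separable Banach space `X`; `B` is linear and weakly*-to-strongly continuous; `𝒥` is a
nonnegative random lower semicontinuous integrand; `𝒢 : W × Ξ → R₀` is Carathéodory with
values in `R` along `B`, Carathéodory into `R` on `B(dom ψ) × Ξ`; `K ⊂ R` is a nonempty
closed convex cone; `ψ` is proper, convex, weakly* lsc with bounded weakly* closed domain;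
and problem (P) has a feasible point with finite objective value. -/
structure StandingSetup (X W R R₀ Ξ Ω : Type*)
    [NormedAddCommGroup X] [NormedSpace ℝ X]
    [NormedAddCommGroup W] [NormedSpace ℝ W]
    [NormedAddCommGroup R] [NormedSpace ℝ R]
    [NormedAddCommGroup R₀] [NormedSpace ℝ R₀]
    [MeasurableSpace R] [BorelSpace R] [MeasurableSpace R₀] [BorelSpace R₀]
    [MetricSpace Ξ] [MeasurableSpace Ξ] [BorelSpace Ξ]
    [MeasurableSpace Ω] : Type _ where
  /-- the sample probability measure -/
  P : Measure Ω
  hP : IsProbabilityMeasure P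
  /-- the law `ℙ` of the random element `ξ` -/
  μ : Measure Ξ
  hμ : IsProbabilityMeasure μ
  /-- the i.i.d. samples `ξ¹, ξ², …` -/
  samp : ℕ → Ω → Ξ
  samp_meas : ∀ i, Measurable (samp i)
  samp_law : ∀ i, Measure.map (samp i) P = μ
  samp_indep : ProbabilityTheory.iIndepFun samp P
  /-- the linear, weakly*-to-strongly continuous operator `B : U → W` -/
  B : StrongDual ℝ X →ₗ[ℝ] W
  B_wsc : ∀ (u : ℕ → StrongDual ℝ X) (u₀ : StrongDual ℝ X),
    WSTendsto u u₀ → Tendsto (fun n => B (u n)) atTop (𝓝 (B u₀))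
  /-- the integrand `𝒥 : W × Ξ → [0,∞)` -/
  J : W → Ξ → ℝ
  J_nonneg : ∀ w ξ, 0 ≤ J w ξ
  /-- random lower semicontinuity of `𝒥`: lower semicontinuity in `w` … -/
  J_lsc : ∀ ξ, LowerSemicontinuous fun w => J w ξ
  /-- … and Effros measurability of the epigraphical multifunction -/
  J_effros : ∀ O : Set (W × ℝ), IsOpen O → MeasurableSet {ξ | ∃ p ∈ O, J p.1 ξ ≤ p.2}
  /-- the control regularizer `ψ : U → [0,∞]` -/
  ψ : StrongDual ℝ X → ℝ≥0∞
  ψ_proper : ∃ u, ψ u ≠ ⊤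
  ψ_convex : ∀ u v : StrongDual ℝ X, ∀ t : ℝ, 0 ≤ t → t ≤ 1 →
    ψ (t • u + (1 - t) • v) ≤ ENNReal.ofReal t * ψ u + ENNReal.ofReal (1 - t) * ψ v
  ψ_wlsc : ∀ (u : ℕ → StrongDual ℝ X) (u₀ : StrongDual ℝ X),
    WSTendsto u u₀ → ψ u₀ ≤ atTop.liminf fun n => ψ (u n)
  ψ_dom_bdd : ∃ C : ℝ, ∀ u, ψ u ≠ ⊤ → ‖u‖ ≤ C
  ψ_dom_closed : ∀ (u : ℕ → StrongDual ℝ X) (u₀ : StrongDual ℝ X),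
    (∀ n, ψ (u n) ≠ ⊤) → WSTendsto u u₀ → ψ u₀ ≠ ⊤
  /-- the nonempty closed convex cone `K ⊂ R` -/
  K : Set R
  K_ne : K.Nonempty
  K_closed : IsClosed K
  K_convex : Convex ℝ K
  K_cone : ∀ (c : ℝ) (r : R), 0 ≤ c → r ∈ K → c • r ∈ K
  /-- the embedding witnessing `R ⊂ R₀` -/
  emb : R →ₗᵢ[ℝ] R₀
  /-- the constraint map `𝒢 : W × Ξ → R₀`, Carathéodory -/
  G₀ : W → Ξ → R₀
  G₀_cont : ∀ ξ, Continuous fun w => G₀ w ξ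
  G₀_meas : ∀ w, Measurable (G₀ w)
  /-- the `R`-valued realization of `𝒢`, i.e. `𝒢(Bu,ξ) ∈ R` for all `(u,ξ)` -/
  G : W → Ξ → R
  G_compat : ∀ (u : StrongDual ℝ X) (ξ : Ξ), G₀ (B u) ξ = emb (G (B u) ξ)
  /-- `𝒢 : B(dom ψ) × Ξ → R` is Carathéodory -/
  G_contOn : ∀ ξ, ContinuousOn (fun w => G w ξ) (B '' {u | ψ u ≠ ⊤})
  G_meas : ∀ w, Measurable (G w)
  /-- problem (P) has a feasible point with finite objective value -/
  feas_pt : ∃ u : StrongDual ℝ X, (∀ᵐ ξ ∂μ, G (B u) ξ ∈ K) ∧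
    (∫⁻ ξ, ENNReal.ofReal (J (B u) ξ) ∂μ) + ψ u ≠ ⊤

namespace StandingSetup

variable {X W R R₀ Ξ Ω : Type*}
    [NormedAddCommGroup X] [NormedSpace ℝ X]
    [NormedAddCommGroup W] [NormedSpace ℝ W]
    [NormedAddCommGroup R] [NormedSpace ℝ R]
    [NormedAddCommGroup R₀] [NormedSpace ℝ R₀]
    [MeasurableSpace R] [BorelSpace R] [MeasurableSpace R₀] [BorelSpace R₀]
    [MetricSpace Ξ] [MeasurableSpace Ξ] [BorelSpace Ξ]
    [MeasurableSpace Ω]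
    (S : StandingSetup X W R R₀ Ξ Ω)

/-- the expected objective `F(u) = E[𝒥(Bu,ξ)]` -/
def F (u : StrongDual ℝ X) : ℝ≥0∞ := ∫⁻ ξ, ENNReal.ofReal (S.J (S.B u) ξ) ∂S.μ

/-- the full objective `F + ψ` of problem (P) -/
def obj (u : StrongDual ℝ X) : ℝ≥0∞ := S.F u + S.ψ u

/-- feasibility for problem (P): `G(u,ξ) ∈ K` for `ℙ`-a.e. `ξ ∈ Ξ` -/
def Feas (u : StrongDual ℝ X) : Prop := ∀ᵐ ξ ∂S.μ, S.G (S.B u) ξ ∈ S.K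

/-- solutions of problem (P) -/
def SolP (u : StrongDual ℝ X) : Prop := S.Feas u ∧ ∀ v, S.Feas v → S.obj u ≤ S.obj v

/-- the optimal value `ϑ*` of problem (P) -/
def valP : ℝ≥0∞ := ⨅ (u : StrongDual ℝ X) (_ : S.Feas u), S.obj u

/-- the SAA objective `F̂_N(·,ω)` -/
def FN (N : ℕ) (ω : Ω) (u : StrongDual ℝ X) : ℝ≥0∞ :=
  (N : ℝ≥0∞)⁻¹ * ∑ i ∈ Finset.range N, ENNReal.ofReal (S.J (S.B u) (S.samp i ω))

/-- the full objective of the SAA problem (P_SAA) -/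
def objN (N : ℕ) (ω : Ω) (u : StrongDual ℝ X) : ℝ≥0∞ := S.FN N ω u + S.ψ u

/-- feasibility for the SAA problem: `G(u,ξⁱ) ∈ K`, `i = 1, …, N` -/
def FeasN (N : ℕ) (ω : Ω) (u : StrongDual ℝ X) : Prop :=
  ∀ i ∈ Finset.range N, S.G (S.B u) (S.samp i ω) ∈ S.K

/-- solutions of the SAA problem (P_SAA) -/
def SolN (N : ℕ) (ω : Ω) (u : StrongDual ℝ X) : Prop :=
  S.FeasN N ω u ∧ ∀ v, S.FeasN N ω v → S.objN N ω u ≤ S.objN N ω v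

/-- the SAA optimal value `ϑ̂_N*` -/
def valN (N : ℕ) (ω : Ω) : ℝ≥0∞ :=
  ⨅ (u : StrongDual ℝ X) (_ : S.FeasN N ω u), S.objN N ω u

/-- the feasible-set multifunction `𝒰(ξ) = {u ∈ U ∣ G(u,ξ) ∈ K}` -/
def Uset (ξ : Ξ) : Set (StrongDual ℝ X) := {u | S.G (S.B u) ξ ∈ S.K}

end StandingSetup

/-- Sequential Banach–Alaoglu for the dual of a separable space. -/
theorem seq_banach_alaoglu {X : Type*} [NormedAddCommGroup X] [NormedSpace ℝ X]
    [SeparableSpace X] (u : ℕ → StrongDual ℝ X) (C : ℝ) (hC : ∀ n, ‖u n‖ ≤ C) :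
    ∃ φ : ℕ → ℕ, StrictMono φ ∧ ∃ u₀ : StrongDual ℝ X, WSTendsto (u ∘ φ) u₀ := by
  have hC0 : 0 ≤ C := le_trans (norm_nonneg _) (hC 0)
  have : Nonempty X := ⟨0⟩
  obtain ⟨x, hx⟩ := TopologicalSpace.exists_dense_seq X
  set s : Set (ℕ → ℝ) := Set.pi Set.univ (fun k => Set.Icc (-(C * ‖x k‖)) (C * ‖x k‖)) with hs
  have hsc : IsCompact s := isCompact_univ_pi fun k => isCompact_Icc
  have hmem : ∀ n, (fun k => u n (x k)) ∈ s := by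
    intro n k _
    have := (u n).le_opNorm (x k)
    have hb : |u n (x k)| ≤ C * ‖x k‖ := by
      calc |u n (x k)| = ‖u n (x k)‖ := rfl
        _ ≤ ‖u n‖ * ‖x k‖ := this
        _ ≤ C * ‖x k‖ := by gcongr; exact hC n
    exact abs_le.mp hb
  obtain ⟨f, _, φ, hφ, hconv⟩ := hsc.tendsto_subseq hmem
  have hptw : ∀ k, Tendsto (fun n => u (φ n) (x k)) atTop (𝓝 (f k)) := by
    intro k
    exact (tendsto_pi_nhds.mp hconv) k
  have hcau : ∀ z : X, CauchySeq fun n => u (φ n) z := by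
    intro z
    rw [Metric.cauchySeq_iff]
    intro ε hε
    have hδ : 0 < ε / (3 * (C + 1)) := by positivity
    obtain ⟨k, hk⟩ := hx.exists_dist_lt z hδ
    have hck : CauchySeq fun n => u (φ n) (x k) := (hptw k).cauchySeq
    obtain ⟨N, hN⟩ := Metric.cauchySeq_iff.mp hck (ε / 3) (by positivity)
    refine ⟨N, fun m hm n hn => ?_⟩
    have hzx : ‖z - x k‖ < ε / (3 * (C + 1)) := by
      rw [← dist_eq_norm]; exact hk
    have key : ∀ j, |u (φ j) z - u (φ j) (x k)| ≤ ε / 3 := by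
      intro j
      have h1 : u (φ j) z - u (φ j) (x k) = u (φ j) (z - x k) := by
        rw [map_sub]
      rw [h1]
      calc |u (φ j) (z - x k)| ≤ ‖u (φ j)‖ * ‖z - x k‖ := (u (φ j)).le_opNorm _
        _ ≤ C * ‖z - x k‖ := by gcongr; exact hC _
        _ ≤ (C + 1) * (ε / (3 * (C + 1))) := by
            apply mul_le_mul (by linarith) hzx.le (norm_nonneg _) (by linarith)
        _ = ε / 3 := by field_simp
    have hmid := hN m hm n hn
    have htri : dist (u (φ m) z) (u (φ n) z) ≤
        |u (φ m) z - u (φ m) (x k)| + dist (u (φ m) (x k)) (u (φ n) (x k))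
          + |u (φ n) (x k) - u (φ n) z| := by
      rw [Real.dist_eq, Real.dist_eq]
      have h1 := abs_sub_le (u (φ m) z) (u (φ m) (x k)) (u (φ n) z)
      have h2 := abs_sub_le (u (φ m) (x k)) (u (φ n) (x k)) (u (φ n) z)
      linarith [h1, h2]
    have habs : |u (φ n) (x k) - u (φ n) z| ≤ ε / 3 := by
      rw [abs_sub_comm]; exact key n
    calc dist (u (φ m) z) (u (φ n) z) ≤ _ := htri
      _ < ε / 3 + ε / 3 + ε / 3 := by
          have := key m
          linarith [hmid, habs]
      _ = ε := by ring
  set g : X → ℝ := fun z => limUnder atTop fun n => u (φ n) z with hg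
  have htend : ∀ z, Tendsto (fun n => u (φ n) z) atTop (𝓝 (g z)) := fun z =>
    (hcau z).tendsto_limUnder
  have hadd : ∀ a b : X, g (a + b) = g a + g b := by
    intro a b
    refine tendsto_nhds_unique ?_ ((htend a).add (htend b))
    have h1 : (fun n => u (φ n) (a + b)) = fun n => u (φ n) a + u (φ n) b := by
      funext n; exact map_add _ _ _
    rw [← h1]; exact htend _
  have hsmul : ∀ (c : ℝ) (a : X), g (c • a) = c • g a := by
    intro c a
    refine tendsto_nhds_unique ?_ ((htend a).const_mul c)
    have h1 : (fun n => u (φ n) (c • a)) = fun n => c * u (φ n) a := by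
      funext n; exact map_smul _ _ _
    rw [← h1]; exact htend _
  have hbound : ∀ z, ‖g z‖ ≤ C * ‖z‖ := by
    intro z
    refine le_of_tendsto' (htend z).norm fun n => ?_
    calc ‖u (φ n) z‖ ≤ ‖u (φ n)‖ * ‖z‖ := (u (φ n)).le_opNorm _
      _ ≤ C * ‖z‖ := by gcongr; exact hC _
  exact ⟨φ, hφ, LinearMap.mkContinuous ⟨⟨g, hadd⟩, hsmul⟩ C hbound, fun z => htend z⟩

/-- Measurability in `ξ` of a random lower semicontinuous integrand, for fixed `w`. -/
theorem measurable_of_rlsc {W Ξ : Type*} [NormedAddCommGroup W]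
    [MetricSpace Ξ] [MeasurableSpace Ξ]
    (J : W → Ξ → ℝ) (J_lsc : ∀ ξ, LowerSemicontinuous fun w => J w ξ)
    (J_effros : ∀ O : Set (W × ℝ), IsOpen O → MeasurableSet {ξ | ∃ p ∈ O, J p.1 ξ ≤ p.2})
    (w : W) : Measurable fun ξ => J w ξ := by
  apply measurable_of_Iic
  intro t
  have hset : (fun ξ => J w ξ) ⁻¹' Set.Iic t =
      ⋂ k : ℕ, {ξ | ∃ p ∈ (Metric.ball w (1 / (k + 1)) ×ˢ Set.Iio (t + 1 / (k + 1))),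
        J p.1 ξ ≤ p.2} := by
    ext ξ
    constructor
    · intro hξ
      refine Set.mem_iInter.mpr fun k => ⟨(w, t), ?_, hξ⟩
      constructor
      · exact Metric.mem_ball_self (by positivity)
      · simp only [Set.mem_Iio]
        have : (0:ℝ) < 1 / (k + 1) := by positivity
        linarith
    · intro hξ
      by_contra h
      have hlt : t < J w ξ := by
        simp only [Set.mem_preimage, Set.mem_Iic, not_le] at h
        exact h
      set y : ℝ := (t + J w ξ) / 2 with hy
      have hy1 : y < J w ξ := by rw [hy]; linarith
      have hy2 : t < y := by rw [hy]; linarith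
      obtain ⟨δ, hδ, hball⟩ := Metric.eventually_nhds_iff.mp (J_lsc ξ w y hy1)
      obtain ⟨k, hk⟩ := exists_nat_one_div_lt (lt_min hδ (by linarith : (0:ℝ) < y - t))
      have hk1 : 1 / ((k:ℝ) + 1) < δ := lt_of_lt_of_le hk (min_le_left _ _)
      have hk2 : 1 / ((k:ℝ) + 1) < y - t := lt_of_lt_of_le hk (min_le_right _ _)
      obtain ⟨p, ⟨hp1, hp2⟩, hp3⟩ := Set.mem_iInter.mp hξ k
      have hpb : y < J p.1 ξ := hball (lt_trans hp1 hk1)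
      have : J p.1 ξ < y := by
        simp only [Set.mem_Iio] at hp2
        calc J p.1 ξ ≤ p.2 := hp3
          _ < t + 1 / (k + 1) := hp2
          _ < y := by linarith
      linarith
  rw [hset]
  exact MeasurableSet.iInter fun k =>
    J_effros _ ((Metric.isOpen_ball).prod isOpen_Iio)

/-- Under the standing setup (Assumption 1), problem (P) has at least one
solution: a feasible point minimizing `F + ψ` over all feasible points. -/
theorem problem_P_has_a_solution {X W R R₀ Ξ Ω : Type*}
    [NormedAddCommGroup X] [NormedSpace ℝ X] [SeparableSpace X] [CompleteSpace X]
    [NormedAddCommGroup W] [NormedSpace ℝ W] [SeparableSpace W] [CompleteSpace W]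
    [NormedAddCommGroup R] [NormedSpace ℝ R] [SeparableSpace R] [CompleteSpace R]
    [NormedAddCommGroup R₀] [NormedSpace ℝ R₀] [SeparableSpace R₀] [CompleteSpace R₀]
    [MeasurableSpace R] [BorelSpace R] [MeasurableSpace R₀] [BorelSpace R₀]
    [MetricSpace Ξ] [CompleteSpace Ξ] [SeparableSpace Ξ]
    [MeasurableSpace Ξ] [BorelSpace Ξ] [MeasurableSpace Ω]
    (S : StandingSetup X W R R₀ Ξ Ω) :
    ∃ u : StrongDual ℝ X, S.SolP u := by
  classical
  obtain ⟨u₀, hu₀f, hu₀fin⟩ := S.feas_pt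
  set m : ℝ≥0∞ := ⨅ (u : StrongDual ℝ X) (_ : S.Feas u), S.obj u with hm
  have hobj₀ : S.obj u₀ ≠ ⊤ := hu₀fin
  have hmle : m ≤ S.obj u₀ := iInf₂_le u₀ hu₀f
  have hmtop : m ≠ ⊤ := fun h => hobj₀ (top_le_iff.mp (h ▸ hmle))
  -- a minimizing sequence of feasible points
  have hseq : ∀ n : ℕ, ∃ u, S.Feas u ∧ S.obj u < m + (↑(n + 1) : ℝ≥0∞)⁻¹ := by
    intro n
    have hpos : ((↑(n + 1) : ℝ≥0∞)⁻¹ : ℝ≥0∞) ≠ 0 := by simp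
    have h1 : m < m + (↑(n + 1) : ℝ≥0∞)⁻¹ := ENNReal.lt_add_right hmtop hpos
    by_contra h
    push_neg at h
    have h2 : m + (↑(n + 1) : ℝ≥0∞)⁻¹ ≤ m := le_iInf₂ fun u hu => h u hu
    exact absurd h1 h2.not_gt
  choose v hvf hvo using hseq
  have hvtop : ∀ n, S.obj (v n) ≠ ⊤ := fun n => (hvo n).ne_top
  have hψfin : ∀ n, S.ψ (v n) ≠ ⊤ := fun n =>
    ne_top_of_le_ne_top (hvtop n) le_add_self
  -- extract a weak* convergent subsequence
  obtain ⟨Cb, hCb⟩ := S.ψ_dom_bdd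
  have hb : ∀ n, ‖v n‖ ≤ Cb := fun n => hCb _ (hψfin n)
  obtain ⟨φ, hφ, ustar, hws⟩ := seq_banach_alaoglu v Cb hb
  have hBconv : Tendsto (fun n => S.B ((v ∘ φ) n)) atTop (𝓝 (S.B ustar)) :=
    S.B_wsc _ _ hws
  have hψstar : S.ψ ustar ≠ ⊤ := S.ψ_dom_closed _ _ (fun n => hψfin (φ n)) hws
  -- feasibility of the weak* limit
  have hfeas : S.Feas ustar := by
    have hall : ∀ᵐ ξ ∂S.μ, ∀ n : ℕ, S.G (S.B (v (φ n))) ξ ∈ S.K :=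
      (ae_all_iff).mpr fun n => hvf (φ n)
    filter_upwards [hall] with ξ hξ
    have hmemset : ∀ n, S.B (v (φ n)) ∈ S.B '' {u | S.ψ u ≠ ⊤} :=
      fun n => ⟨v (φ n), hψfin (φ n), rfl⟩
    have hmemstar : S.B ustar ∈ S.B '' {u | S.ψ u ≠ ⊤} := ⟨ustar, hψstar, rfl⟩
    have hcw : ContinuousWithinAt (fun w => S.G w ξ)
        (S.B '' {u | S.ψ u ≠ ⊤}) (S.B ustar) := S.G_contOn ξ _ hmemstar
    have htsub : Tendsto (fun n => S.B (v (φ n))) atTop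
        (𝓝[S.B '' {u | S.ψ u ≠ ⊤}] (S.B ustar)) :=
      tendsto_nhdsWithin_of_tendsto_nhds_of_eventually_within _ hBconv
        (Eventually.of_forall hmemset)
    have hGc : Tendsto (fun n => S.G (S.B (v (φ n))) ξ) atTop
        (𝓝 (S.G (S.B ustar) ξ)) := hcw.tendsto.comp htsub
    exact S.K_closed.mem_of_tendsto hGc (Eventually.of_forall hξ)
  -- liminf of the objective along the subsequence is at most m
  have hlim_obj : atTop.liminf (fun n => S.obj (v (φ n))) ≤ m := by
    have h1 : ∀ n, S.obj (v (φ n)) ≤ m + (↑(n + 1) : ℝ≥0∞)⁻¹ := by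
      intro n
      refine (hvo (φ n)).le.trans ?_
      gcongr
      exact_mod_cast hφ.le_apply
    have h2 : Tendsto (fun n : ℕ => m + (↑(n + 1) : ℝ≥0∞)⁻¹) atTop (𝓝 m) := by
      have := ENNReal.tendsto_inv_nat_nhds_zero.comp (tendsto_add_atTop_nat 1)
      have h3 := tendsto_const_nhds.add (f := fun _ : ℕ => m) this
      simpa using h3
    calc atTop.liminf (fun n => S.obj (v (φ n)))
        ≤ atTop.liminf (fun n : ℕ => m + (↑(n + 1) : ℝ≥0∞)⁻¹) :=
          liminf_le_liminf (Eventually.of_forall h1)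
      _ = m := h2.liminf_eq
  -- weak* sequential lower semicontinuity of F
  have hFle : S.F ustar ≤ atTop.liminf fun n => S.F (v (φ n)) := by
    have hpt : ∀ ξ, ENNReal.ofReal (S.J (S.B ustar) ξ) ≤
        atTop.liminf fun n => ENNReal.ofReal (S.J (S.B (v (φ n))) ξ) := by
      intro ξ
      rw [le_liminf_iff]
      intro b hb
      obtain ⟨c, hbc, hc⟩ := exists_between hb
      have hcne : c ≠ ⊤ := hc.ne_top
      have hclt : c.toReal < S.J (S.B ustar) ξ := by
        have := (ENNReal.lt_ofReal_iff_toReal_lt hcne).mp hc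
        exact this
      have hev := hBconv.eventually ((S.J_lsc ξ) (S.B ustar) c.toReal hclt)
      filter_upwards [hev] with n hn
      calc b < c := hbc
        _ = ENNReal.ofReal c.toReal := (ENNReal.ofReal_toReal hcne).symm
        _ ≤ ENNReal.ofReal (S.J (S.B (v (φ n))) ξ) := ENNReal.ofReal_le_ofReal hn.le
    have hmeas : ∀ n, Measurable fun ξ =>
        ENNReal.ofReal (S.J (S.B (v (φ n))) ξ) := fun n =>
      (measurable_of_rlsc S.J S.J_lsc S.J_effros _).ennreal_ofReal
    calc S.F ustar
        ≤ ∫⁻ ξ, atTop.liminf (fun n => ENNReal.ofReal (S.J (S.B (v (φ n))) ξ)) ∂S.μ :=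
          lintegral_mono hpt
      _ ≤ atTop.liminf fun n => S.F (v (φ n)) := lintegral_liminf_le hmeas
  -- weak* lower semicontinuity of ψ
  have hψle : S.ψ ustar ≤ atTop.liminf fun n => S.ψ (v (φ n)) := S.ψ_wlsc _ _ hws
  -- conclusion
  have hobjstar : S.obj ustar ≤ m := by
    calc S.obj ustar = S.F ustar + S.ψ ustar := rfl
      _ ≤ (atTop.liminf fun n => S.F (v (φ n))) +
            atTop.liminf fun n => S.ψ (v (φ n)) := add_le_add hFle hψle
      _ ≤ atTop.liminf fun n => S.F (v (φ n)) + S.ψ (v (φ n)) := by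
          rw [liminf_eq_iSup_iInf_of_nat, liminf_eq_iSup_iInf_of_nat,
            liminf_eq_iSup_iInf_of_nat, ENNReal.iSup_add_iSup ?hdir]
          · exact iSup_mono fun n => le_iInf₂ fun i hi =>
              add_le_add (iInf₂_le i hi) (iInf₂_le i hi)
          case hdir =>
            intro i j
            refine ⟨max i j, add_le_add ?_ ?_⟩
            · exact le_iInf₂ fun k hk => iInf₂_le k (le_trans (le_max_left i j) hk)
            · exact le_iInf₂ fun k hk => iInf₂_le k (le_trans (le_max_right i j) hk)
      _ = atTop.liminf fun n => S.obj (v (φ n)) := rfl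
      _ ≤ m := hlim_obj
  exact ⟨ustar, hfeas, fun w hw => hobjstar.trans (iInf₂_le w hw)⟩
end
end

section
/- Under the standing setup (Assumption 1), with probability one the following holds: for every N ∈ ℕ, the SAA problem (P_SAA) with samples ξ¹, …, ξ^N has at least one solution. -/
open MeasureTheory Filter Topology TopologicalSpace
open scoped ENNReal

noncomputable section

private lemma SAA_liminf_add (u v : ℕ → ℝ≥0∞) :
    liminf u atTop + liminf v atTop ≤ liminf (fun n => u n + v n) atTop := by
  rcases eq_or_ne (liminf u atTop) 0 with ha | ha
  · rw [ha, zero_add]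
    exact liminf_le_liminf (Eventually.of_forall fun n => le_add_self)
  rcases eq_or_ne (liminf v atTop) 0 with hb | hb
  · rw [hb, add_zero]
    exact liminf_le_liminf (Eventually.of_forall fun n => le_self_add)
  refine le_of_forall_lt fun c hc => ?_
  obtain ⟨y', hy', z', hz', hc'⟩ := ENNReal.exists_lt_add_of_lt_add hc ha hb
  have h1 : y' + z' ≤ liminf (fun n => u n + v n) atTop := by
    refine le_liminf_of_le (by isBoundedDefault) ?_
    filter_upwards [eventually_lt_of_lt_liminf hy', eventually_lt_of_lt_liminf hz'] with n h1 h2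
    exact add_le_add h1.le h2.le
  exact lt_of_lt_of_le hc' h1

private lemma SAA_sum_liminf {ι : Type*} (s : Finset ι) (f : ι → ℕ → ℝ≥0∞) :
    (∑ i ∈ s, liminf (f i) atTop) ≤ liminf (fun n => ∑ i ∈ s, f i n) atTop := by
  classical
  induction s using Finset.induction with
  | empty => simp
  | insert a s h ih =>
      simp only [Finset.sum_insert h]
      exact le_trans (add_le_add_right ih _) (SAA_liminf_add _ _)

private lemma SAA_const_mul_liminf (c : ℝ≥0∞) (g : ℕ → ℝ≥0∞) :
    c * liminf g atTop ≤ liminf (fun n => c * g n) atTop := by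
  have h := ENNReal.le_liminf_mul (f := atTop) (u := fun _ : ℕ => c) (v := g)
  simpa [liminf_const, Pi.mul_def] using h

private lemma SAA_ofReal_liminf {W : Type*} [TopologicalSpace W] {J : W → ℝ}
    (hJ : LowerSemicontinuous J) {w : ℕ → W} {w₀ : W}
    (hw : Tendsto w atTop (𝓝 w₀)) :
    ENNReal.ofReal (J w₀) ≤ liminf (fun n => ENNReal.ofReal (J (w n))) atTop := by
  refine (le_liminf_iff (by isBoundedDefault) (by isBoundedDefault)).2 fun b hb => ?_
  have hbt : b ≠ ⊤ := hb.ne_top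
  have h1 : b.toReal < J w₀ := ENNReal.toReal_lt_of_lt_ofReal hb
  filter_upwards [hw.eventually (hJ w₀ _ h1)] with n hn
  have : b = ENNReal.ofReal b.toReal := (ENNReal.ofReal_toReal hbt).symm
  rw [this]
  exact (ENNReal.ofReal_lt_ofReal_iff (lt_of_le_of_lt ENNReal.toReal_nonneg hn)).2 hn

private lemma SAA_weakstar_subseq {X : Type*} [NormedAddCommGroup X] [NormedSpace ℝ X]
    [SeparableSpace X] (u : ℕ → StrongDual ℝ X) {C : ℝ} (hC : ∀ n, ‖u n‖ ≤ C) :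
    ∃ φ : ℕ → ℕ, StrictMono φ ∧ ∃ u₀ : StrongDual ℝ X, WSTendsto (u ∘ φ) u₀ := by
  obtain ⟨d, hd⟩ := TopologicalSpace.exists_dense_seq X
  -- a compact box containing the values on the dense sequence
  set s : Set (ℕ → ℝ) := Set.pi Set.univ fun k => Set.Icc (-(C * ‖d k‖)) (C * ‖d k‖) with hs
  have hsc : IsCompact s := isCompact_univ_pi fun k => isCompact_Icc
  have hmem : ∀ n, (fun k => u n (d k)) ∈ s := by
    intro n k _
    have h1 : ‖u n (d k)‖ ≤ C * ‖d k‖ :=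
      le_trans ((u n).le_opNorm (d k)) (mul_le_mul_of_nonneg_right (hC n) (norm_nonneg _))
    rw [Real.norm_eq_abs] at h1
    exact abs_le.mp h1
  obtain ⟨a, -, φ, hφ, hconv⟩ := hsc.tendsto_subseq hmem
  rw [tendsto_pi_nhds] at hconv
  have hk : ∀ k, Tendsto (fun n => u (φ n) (d k)) atTop (𝓝 (a k)) := fun k => hconv k
  set C' : ℝ := max C 1 with hC'def
  have hC'pos : (0:ℝ) < C' := lt_of_lt_of_le one_pos (le_max_right _ _)
  have hC' : ∀ n, ‖u n‖ ≤ C' := fun n => (hC n).trans (le_max_left _ _)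
  have key : ∀ x : X, ∃ L : ℝ, Tendsto (fun n => u (φ n) x) atTop (𝓝 L) := by
    intro x
    apply cauchySeq_tendsto_of_complete
    rw [Metric.cauchySeq_iff]
    intro ε hε
    obtain ⟨k, hk'⟩ := hd.exists_dist_lt x (show (0:ℝ) < ε / (4 * C') by positivity)
    have hcau : CauchySeq fun n => u (φ n) (d k) := (hk k).cauchySeq
    rw [Metric.cauchySeq_iff] at hcau
    obtain ⟨N, hN⟩ := hcau (ε / 2) (by positivity)
    refine ⟨N, fun m hm n hn => ?_⟩
    have h1 : ∀ j, dist (u (φ j) x) (u (φ j) (d k)) ≤ ε / 4 := by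
      intro j
      rw [dist_eq_norm, ← map_sub]
      calc ‖u (φ j) (x - d k)‖ ≤ ‖u (φ j)‖ * ‖x - d k‖ := (u (φ j)).le_opNorm _
        _ ≤ C' * (ε / (4 * C')) := by
            apply mul_le_mul (hC' _) _ (norm_nonneg _) hC'pos.le
            rw [← dist_eq_norm]
            exact hk'.le
        _ = ε / 4 := by field_simp
    calc dist (u (φ m) x) (u (φ n) x)
        ≤ dist (u (φ m) x) (u (φ m) (d k)) + dist (u (φ m) (d k)) (u (φ n) (d k)) +
            dist (u (φ n) (d k)) (u (φ n) x) := dist_triangle4 _ _ _ _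
      _ < ε / 4 + ε / 2 + ε / 4 := by
          have h2 := hN m hm n hn
          have h3 := h1 m
          have h4 : dist (u (φ n) (d k)) (u (φ n) x) ≤ ε / 4 := by
            rw [dist_comm]; exact h1 n
          linarith
      _ = ε := by ring
  choose L hL using key
  have hadd : ∀ x y, L (x + y) = L x + L y := by
    intro x y
    refine tendsto_nhds_unique (hL (x + y)) ?_
    simpa [map_add] using (hL x).add (hL y)
  have hsmul : ∀ (c : ℝ) (x : X), L (c • x) = c * L x := by
    intro c x
    refine tendsto_nhds_unique (hL (c • x)) ?_
    simpa [_root_.map_smul, smul_eq_mul] using (hL x).const_mul c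
  have hbound : ∀ x, ‖L x‖ ≤ C' * ‖x‖ := by
    intro x
    refine le_of_tendsto (hL x).norm (Eventually.of_forall fun n => ?_)
    exact le_trans ((u (φ n)).le_opNorm x) (mul_le_mul_of_nonneg_right (hC' _) (norm_nonneg _))
  refine ⟨φ, hφ, LinearMap.mkContinuous
    ({ toFun := L, map_add' := hadd, map_smul' := by intro c x; simpa using hsmul c x } : X →ₗ[ℝ] ℝ)
    C' hbound, fun x => hL x⟩

/-- Under the standing setup (Assumption 1), with probability one, for every
`N ≥ 1` the SAA problem (P_SAA) with samples `ξ¹, …, ξᴺ` has at least one solution. -/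
theorem SAA_problems_have_solutions_almost_surely {X W R R₀ Ξ Ω : Type*}
    [NormedAddCommGroup X] [NormedSpace ℝ X] [SeparableSpace X] [CompleteSpace X]
    [NormedAddCommGroup W] [NormedSpace ℝ W] [SeparableSpace W] [CompleteSpace W]
    [NormedAddCommGroup R] [NormedSpace ℝ R] [SeparableSpace R] [CompleteSpace R]
    [NormedAddCommGroup R₀] [NormedSpace ℝ R₀] [SeparableSpace R₀] [CompleteSpace R₀]
    [MeasurableSpace R] [BorelSpace R] [MeasurableSpace R₀] [BorelSpace R₀]
    [MetricSpace Ξ] [CompleteSpace Ξ] [SeparableSpace Ξ]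
    [MeasurableSpace Ξ] [BorelSpace Ξ] [MeasurableSpace Ω]
    (S : StandingSetup X W R R₀ Ξ Ω) :
    ∀ᵐ ω ∂S.P, ∀ N : ℕ, 1 ≤ N → ∃ u : StrongDual ℝ X, S.SolN N ω u := by
  classical
  obtain ⟨u₀, hu₀feas, hu₀fin⟩ := S.feas_pt
  have hψu₀ : S.ψ u₀ ≠ ⊤ := fun h => hu₀fin (by rw [h, add_top])
  have hA : MeasurableSet {ξ : Ξ | S.G (S.B u₀) ξ ∈ S.K} :=
    (S.G_meas (S.B u₀)) S.K_closed.measurableSet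
  have hsampmem : ∀ i : ℕ, ∀ᵐ ω ∂S.P, S.G (S.B u₀) (S.samp i ω) ∈ S.K := by
    intro i
    have h1 : ∀ᵐ ξ ∂(Measure.map (S.samp i) S.P), S.G (S.B u₀) ξ ∈ S.K := by
      rw [S.samp_law i]; exact hu₀feas
    exact (ae_map_iff (S.samp_meas i).aemeasurable hA).mp h1
  filter_upwards [ae_all_iff.2 hsampmem] with ω hω
  intro N hN
  -- the SAA feasible set is nonempty and the optimal value is finite
  have hu₀FeasN : S.FeasN N ω u₀ := fun i _ => hω i
  have hNne : (N : ℝ≥0∞)⁻¹ ≠ ⊤ := by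
    have hN0 : (N : ℝ≥0∞) ≠ 0 := by
      exact_mod_cast Nat.one_le_iff_ne_zero.mp hN
    exact ENNReal.inv_ne_top.2 hN0
  have hFNfin : ∀ u, S.FN N ω u ≠ ⊤ := by
    intro u
    refine ENNReal.mul_ne_top hNne ?_
    exact (ENNReal.sum_lt_top.2 fun i _ => ENNReal.ofReal_lt_top).ne
  set m : ℝ≥0∞ := S.valN N ω with hm
  have hmle : m ≤ S.objN N ω u₀ := iInf₂_le u₀ hu₀FeasN
  have hmfin : m ≠ ⊤ := by
    refine ne_top_of_le_ne_top ?_ hmle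
    exact ENNReal.add_ne_top.2 ⟨hFNfin u₀, hψu₀⟩
  -- a minimizing sequence
  set ε : ℕ → ℝ≥0∞ := fun n => (((n : ℕ) + 1 : ℕ) : ℝ≥0∞)⁻¹ with hε
  have hεpos : ∀ n, ε n ≠ 0 := by
    intro n
    simp [hε, ENNReal.inv_ne_zero]
  have hmin : ∀ n : ℕ, ∃ u, S.FeasN N ω u ∧ S.objN N ω u < m + ε n := by
    intro n
    have h1 : m < m + ε n := ENNReal.lt_add_right hmfin (hεpos n)
    rw [hm, StandingSetup.valN] at h1
    obtain ⟨u, hu⟩ := iInf_lt_iff.mp h1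
    obtain ⟨hfeas, hlt⟩ := iInf_lt_iff.mp hu
    exact ⟨u, hfeas, hlt⟩
  choose w hwF hwlt using hmin
  have hwfin : ∀ n, S.ψ (w n) ≠ ⊤ := by
    intro n
    have h1 : S.objN N ω (w n) ≠ ⊤ :=
      ((hwlt n).trans_le le_top).ne_top
    intro h
    exact h1 (by rw [StandingSetup.objN, h, add_top])
  have hwfin' : ∀ n, S.objN N ω (w n) ≠ ⊤ := fun n => ((hwlt n).trans_le le_top).ne_top
  obtain ⟨C, hC⟩ := S.ψ_dom_bdd
  have hwbdd : ∀ n, ‖w n‖ ≤ C := fun n => hC (w n) (hwfin n)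
  obtain ⟨φ, hφ, ustar, hws⟩ := SAA_weakstar_subseq w hwbdd
  have hψustar : S.ψ ustar ≠ ⊤ := S.ψ_dom_closed (w ∘ φ) ustar (fun n => hwfin (φ n)) hws
  have hB : Tendsto (fun n => S.B (w (φ n))) atTop (𝓝 (S.B ustar)) := S.B_wsc (w ∘ φ) ustar hws
  -- feasibility of the limit
  have hfeasstar : S.FeasN N ω ustar := by
    intro i hi
    have hset : S.B ustar ∈ S.B '' {u | S.ψ u ≠ ⊤} := ⟨ustar, hψustar, rfl⟩
    have hGc : ContinuousWithinAt (fun v => S.G v (S.samp i ω)) (S.B '' {u | S.ψ u ≠ ⊤})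
        (S.B ustar) := S.G_contOn (S.samp i ω) _ hset
    have hmemim : ∀ n, S.B (w (φ n)) ∈ S.B '' {u | S.ψ u ≠ ⊤} :=
      fun n => ⟨w (φ n), hwfin (φ n), rfl⟩
    have htend : Tendsto (fun n => S.G (S.B (w (φ n))) (S.samp i ω)) atTop
        (𝓝 (S.G (S.B ustar) (S.samp i ω))) := by
      refine hGc.tendsto.comp ?_
      rw [tendsto_nhdsWithin_iff]
      exact ⟨hB, Eventually.of_forall hmemim⟩
    exact S.K_closed.mem_of_tendsto htend
      (Eventually.of_forall fun n => hwF (φ n) i hi)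
  -- the objective of the limit is at most m
  have hobjstar : S.objN N ω ustar ≤ m := by
    have hψliminf : S.ψ ustar ≤ liminf (fun n => S.ψ (w (φ n))) atTop := S.ψ_wlsc (w ∘ φ) ustar hws
    have hFstep : ∀ i ∈ Finset.range N,
        ENNReal.ofReal (S.J (S.B ustar) (S.samp i ω)) ≤
          liminf (fun n => ENNReal.ofReal (S.J (S.B (w (φ n))) (S.samp i ω))) atTop :=
      fun i _ => SAA_ofReal_liminf (S.J_lsc (S.samp i ω)) hB
    have hsum : (∑ i ∈ Finset.range N, ENNReal.ofReal (S.J (S.B ustar) (S.samp i ω))) ≤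
        liminf (fun n => ∑ i ∈ Finset.range N,
          ENNReal.ofReal (S.J (S.B (w (φ n))) (S.samp i ω))) atTop := by
      refine le_trans (Finset.sum_le_sum hFstep) ?_
      exact SAA_sum_liminf _ _
    have hFN : S.FN N ω ustar ≤ liminf (fun n => S.FN N ω (w (φ n))) atTop := by
      rw [StandingSetup.FN]
      refine le_trans (mul_le_mul_right hsum _) ?_
      exact SAA_const_mul_liminf _ _
    have hobjliminf : S.objN N ω ustar ≤ liminf (fun n => S.objN N ω (w (φ n))) atTop := by
      rw [StandingSetup.objN]
      refine le_trans (add_le_add hFN hψliminf) ?_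
      exact SAA_liminf_add _ _
    have hbound : liminf (fun n => S.objN N ω (w (φ n))) atTop ≤ m := by
      have h1 : Tendsto (fun n : ℕ => m + ε (φ n)) atTop (𝓝 m) := by
        have h2 : Tendsto (fun n : ℕ => ε n) atTop (𝓝 0) := by
          exact ENNReal.tendsto_inv_nat_nhds_zero.comp (tendsto_add_atTop_nat 1)
        have h3 : Tendsto (fun n : ℕ => ε (φ n)) atTop (𝓝 0) := h2.comp hφ.tendsto_atTop
        simpa using tendsto_const_nhds.add h3
      calc liminf (fun n => S.objN N ω (w (φ n))) atTop
          ≤ liminf (fun n : ℕ => m + ε (φ n)) atTop :=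
            liminf_le_liminf (Eventually.of_forall fun n => (hwlt (φ n)).le)
        _ = m := h1.liminf_eq
    exact hobjliminf.trans hbound
  exact ⟨ustar, hfeasstar, fun v hv => hobjstar.trans (iInf₂_le v hv)⟩
end
end

section
/- Under the standing setup (Assumption 1), with probability one the following holds: for every u ∈ dom ψ and every sequence (u_N) ⊂ dom ψ with u_N ⇀* u, one has liminf_{N→∞} F̂_N(u_N) ≥ F(u) and liminf_{N→∞} (1/N) Σ_{i=1}^N I_{𝒰(ξ^i)}(u_N) ≥ E[I_{𝒰(ξ)}(u)]. -/
open MeasureTheory Filter Topology TopologicalSpace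
open scoped ENNReal

noncomputable section

section Aux

open scoped Classical

private lemma aux_inv_lt {a ρ : ℝ} (hρ : 0 < ρ) (ha : 1 / ρ < a) : a⁻¹ < ρ := by
  have ha0 : 0 < a := lt_trans (by positivity) ha
  have h1 : 1 < a * ρ := by
    have := (div_lt_iff₀ hρ).1 ha
    linarith
  rw [← one_div, div_lt_iff₀ ha0]
  linarith [mul_comm a ρ]

variable {X W R R₀ Ξ Ω : Type*}
    [NormedAddCommGroup X] [NormedSpace ℝ X] [SeparableSpace X] [CompleteSpace X]
    [NormedAddCommGroup W] [NormedSpace ℝ W] [SeparableSpace W] [CompleteSpace W]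
    [NormedAddCommGroup R] [NormedSpace ℝ R] [SeparableSpace R] [CompleteSpace R]
    [NormedAddCommGroup R₀] [NormedSpace ℝ R₀] [SeparableSpace R₀] [CompleteSpace R₀]
    [MeasurableSpace R] [BorelSpace R] [MeasurableSpace R₀] [BorelSpace R₀]
    [MetricSpace Ξ] [CompleteSpace Ξ] [SeparableSpace Ξ]
    [MeasurableSpace Ξ] [BorelSpace Ξ] [MeasurableSpace Ω]
    (S : StandingSetup X W R R₀ Ξ Ω)

/-- Strong law of large numbers for bounded nonnegative functions of the samples. -/
private lemma saa_slln (f : Ξ → ℝ) (hf : Measurable f) (c : ℝ) (h0 : ∀ ξ, 0 ≤ f ξ)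
    (hc : ∀ ξ, f ξ ≤ c) :
    ∀ᵐ ω ∂S.P, Tendsto (fun N : ℕ => (∑ i ∈ Finset.range N, f (S.samp i ω)) / N) atTop
      (𝓝 (∫ ξ, f ξ ∂S.μ)) := by
  have hPm := S.hP
  set Y : ℕ → Ω → ℝ := fun i ω => f (S.samp i ω) with hY
  have hYm : ∀ i, Measurable (Y i) := fun i => hf.comp (S.samp_meas i)
  have hident : ∀ i, ProbabilityTheory.IdentDistrib (Y i) (Y 0) S.P S.P := by
    intro i
    refine ⟨(hYm i).aemeasurable, (hYm 0).aemeasurable, ?_⟩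
    show Measure.map (f ∘ S.samp i) S.P = Measure.map (f ∘ S.samp 0) S.P
    rw [← Measure.map_map hf (S.samp_meas i), ← Measure.map_map hf (S.samp_meas 0),
      S.samp_law, S.samp_law]
  have hint : Integrable (Y 0) S.P := by
    refine (integrable_const c).mono' (hYm 0).aestronglyMeasurable ?_
    filter_upwards with ω
    rw [Real.norm_eq_abs, abs_of_nonneg (h0 _)]
    exact hc _
  have hindep : Pairwise (Function.onFun (ProbabilityTheory.IndepFun · · S.P) Y) := fun i j hij =>
    (S.samp_indep.comp (fun _ => f) (fun _ => hf)).indepFun hij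
  have h2 := ProbabilityTheory.strong_law_ae_real Y hint hindep hident
  have hEY : ∫ x, Y 0 x ∂S.P = ∫ ξ, f ξ ∂S.μ := by
    rw [← S.samp_law 0, integral_map (S.samp_meas 0).aemeasurable hf.aestronglyMeasurable]
  rwa [hEY] at h2

/-- Measurability of the infimum of `J` over an open ball, from Effros measurability. -/
private lemma saa_measInf (c : W) (r : ℝ) (hr : 0 < r) :
    Measurable fun ξ => sInf ((fun w => S.J w ξ) '' Metric.ball c r) := by
  apply measurable_of_Iio
  intro b
  have hset : (fun ξ => sInf ((fun w => S.J w ξ) '' Metric.ball c r)) ⁻¹' Set.Iio b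
      = {ξ | ∃ p ∈ Metric.ball c r ×ˢ Set.Iio b, S.J p.1 ξ ≤ p.2} := by
    ext ξ
    simp only [Set.mem_preimage, Set.mem_Iio, Set.mem_setOf_eq]
    constructor
    · intro h
      have hne : ((fun w => S.J w ξ) '' Metric.ball c r).Nonempty :=
        ⟨S.J c ξ, ⟨c, Metric.mem_ball_self hr, rfl⟩⟩
      obtain ⟨x, hx, hxb⟩ := exists_lt_of_csInf_lt hne h
      obtain ⟨w', hw', rfl⟩ := hx
      exact ⟨(w', S.J w' ξ), Set.mk_mem_prod hw' hxb, le_refl _⟩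
    · rintro ⟨⟨w', t⟩, hp, hle⟩
      obtain ⟨hw', ht⟩ := hp
      have h1 : sInf ((fun w => S.J w ξ) '' Metric.ball c r) ≤ S.J w' ξ := by
        apply csInf_le
        · refine ⟨0, ?_⟩
          rintro x ⟨w'', _, rfl⟩
          exact S.J_nonneg _ _
        · exact ⟨w', hw', rfl⟩
      exact lt_of_le_of_lt (h1.trans hle) ht
  rw [hset]
  exact S.J_effros _ (Metric.isOpen_ball.prod isOpen_Iio)

end Aux

/-- With probability one: for every `u ∈ dom ψ` and every sequence
`(u_N) ⊂ dom ψ` with `u_N ⇀* u`, one has `liminf F̂_N(u_N) ≥ F(u)` and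
`liminf (1/N) ∑ I_{𝒰(ξⁱ)}(u_N) ≥ E[I_{𝒰(ξ)}(u)]`. -/
theorem SAA_objectives_epi_liminf_almost_surely {X W R R₀ Ξ Ω : Type*}
    [NormedAddCommGroup X] [NormedSpace ℝ X] [SeparableSpace X] [CompleteSpace X]
    [NormedAddCommGroup W] [NormedSpace ℝ W] [SeparableSpace W] [CompleteSpace W]
    [NormedAddCommGroup R] [NormedSpace ℝ R] [SeparableSpace R] [CompleteSpace R]
    [NormedAddCommGroup R₀] [NormedSpace ℝ R₀] [SeparableSpace R₀] [CompleteSpace R₀]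
    [MeasurableSpace R] [BorelSpace R] [MeasurableSpace R₀] [BorelSpace R₀]
    [MetricSpace Ξ] [CompleteSpace Ξ] [SeparableSpace Ξ]
    [MeasurableSpace Ξ] [BorelSpace Ξ] [MeasurableSpace Ω]
    (S : StandingSetup X W R R₀ Ξ Ω) :
    ∀ᵐ ω ∂S.P, ∀ (u₀ : StrongDual ℝ X) (useq : ℕ → StrongDual ℝ X),
      S.ψ u₀ ≠ ⊤ → (∀ n, S.ψ (useq n) ≠ ⊤) → WSTendsto useq u₀ →
      S.F u₀ ≤ (atTop.liminf fun N => S.FN N ω (useq N)) ∧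
      (∫⁻ ξ, iInd (S.Uset ξ) u₀ ∂S.μ) ≤ atTop.liminf fun N : ℕ =>
        (N : ℝ≥0∞)⁻¹ * ∑ i ∈ Finset.range N, iInd (S.Uset (S.samp i ω)) (useq N) := by
  classical
  have hPm := S.hP
  have hμm := S.hμ
  -- a countable dense sequence in `W`
  haveI : SecondCountableTopology W := UniformSpace.secondCountable_of_separable W
  obtain ⟨D, hD⟩ := TopologicalSpace.exists_dense_seq W
  -- a countable dense sequence in `T = B(dom ψ)`
  set T : Set W := S.B '' {u | S.ψ u ≠ ⊤} with hT
  have hTne : T.Nonempty := by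
    obtain ⟨u, hu⟩ := S.ψ_proper
    exact ⟨S.B u, u, hu, rfl⟩
  haveI : Nonempty T := hTne.to_subtype
  obtain ⟨e₀, he₀⟩ := TopologicalSpace.exists_dense_seq T
  set e : ℕ → W := fun i => (e₀ i : W) with he
  have heT : ∀ i, e i ∈ T := fun i => (e₀ i).2
  have heD : ∀ w' ∈ T, ∀ ε > 0, ∃ i, dist (e i) w' < ε := by
    intro w' hw' ε hε
    obtain ⟨i, hi⟩ := Metric.denseRange_iff.1 he₀ ⟨w', hw'⟩ ε hε
    refine ⟨i, ?_⟩
    rw [dist_comm]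
    simpa [Subtype.dist_eq] using hi
  -- lower bound for images of `J`
  have hbdd : ∀ (s : Set W) (ξ : Ξ), BddBelow ((fun w' => S.J w' ξ) '' s) := by
    intro s ξ
    refine ⟨0, ?_⟩
    rintro x ⟨w'', _, rfl⟩
    exact S.J_nonneg _ _
  -- the truncated ball-infima of `J`
  set f₁ : ℕ → ℕ → ℕ → Ξ → ℝ := fun j m k ξ =>
    min (k : ℝ) (sInf ((fun w' => S.J w' ξ) '' Metric.ball (D j) (((m : ℝ) + 1)⁻¹))) with hf₁
  have hf₁0 : ∀ j m k ξ, 0 ≤ f₁ j m k ξ := by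
    intro j m k ξ
    apply le_min (by positivity)
    apply Real.sInf_nonneg
    rintro x ⟨w'', _, rfl⟩
    exact S.J_nonneg _ _
  have hf₁le : ∀ j m k ξ, f₁ j m k ξ ≤ (k : ℝ) := fun j m k ξ => min_le_left _ _
  have hf₁meas : ∀ j m k, Measurable (f₁ j m k) := fun j m k =>
    measurable_const.min (saa_measInf S (D j) _ (by positivity))
  -- the sets encoding constraint violation near a point
  set C : W → ℝ → ℝ → Set Ξ := fun c r k =>
    ⋂ i, {ξ | dist (e i) c < r → 1 ≤ k * Metric.infDist (S.G (e i) ξ) S.K} with hCdef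
  have measHelp : ∀ (c : W) (r k : ℝ), MeasurableSet (C c r k) := by
    intro c r k
    apply MeasurableSet.iInter
    intro i
    by_cases h : dist (e i) c < r
    · have hs : {ξ | dist (e i) c < r → 1 ≤ k * Metric.infDist (S.G (e i) ξ) S.K}
          = {ξ | 1 ≤ k * Metric.infDist (S.G (e i) ξ) S.K} := by
        ext ξ; simp [h]
      rw [hs]
      exact measurableSet_le measurable_const
        (measurable_const.mul
          (((Metric.continuous_infDist_pt S.K).measurable).comp (S.G_meas (e i))))
    · have hs : {ξ | dist (e i) c < r → 1 ≤ k * Metric.infDist (S.G (e i) ξ) S.K}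
          = Set.univ := by
        ext ξ; simp [h]
      rw [hs]
      exact MeasurableSet.univ
  have propHelp : ∀ (c : W) (r k : ℝ) (ξ : Ξ), ξ ∈ C c r k → ∀ w' ∈ T, dist w' c < r →
      1 ≤ k * Metric.infDist (S.G w' ξ) S.K := by
    intro c r k ξ hξ w' hw' hdist
    have hpos : 0 < r - dist w' c := by linarith
    have hsel : ∀ l : ℕ, ∃ i, dist (e i) w' < min (((l : ℝ) + 1)⁻¹) (r - dist w' c) := by
      intro l
      exact heD w' hw' _ (lt_min (by positivity) hpos)
    choose σ hσ using hsel
    have hmem : ∀ l, 1 ≤ k * Metric.infDist (S.G (e (σ l)) ξ) S.K := by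
      intro l
      apply Set.mem_iInter.1 hξ (σ l)
      have h1 : dist (e (σ l)) w' < r - dist w' c := (hσ l).trans_le (min_le_right _ _)
      calc dist (e (σ l)) c ≤ dist (e (σ l)) w' + dist w' c := dist_triangle _ _ _
        _ < r := by linarith
    have htend : Tendsto (fun l => e (σ l)) atTop (𝓝 w') := by
      rw [tendsto_iff_dist_tendsto_zero]
      apply squeeze_zero (fun l => dist_nonneg)
        (fun l => le_of_lt ((hσ l).trans_le (min_le_left _ _)))
      simpa [one_div] using tendsto_one_div_add_atTop_nhds_zero_nat (𝕜 := ℝ)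
    have htendT : Tendsto (fun l => e (σ l)) atTop (𝓝[T] w') :=
      tendsto_nhdsWithin_iff.2 ⟨htend, Filter.Eventually.of_forall fun l => heT _⟩
    have hc : Tendsto (fun l => k * Metric.infDist (S.G (e (σ l)) ξ) S.K) atTop
        (𝓝 (k * Metric.infDist (S.G w' ξ) S.K)) := by
      have hG : Tendsto (fun l => S.G (e (σ l)) ξ) atTop (𝓝 (S.G w' ξ)) :=
        Filter.Tendsto.comp (S.G_contOn ξ w' hw') htendT
      exact tendsto_const_nhds.mul (((Metric.continuous_infDist_pt S.K).tendsto _).comp hG)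
    exact ge_of_tendsto hc (Filter.Eventually.of_forall hmem)
  -- good events from the SLLN
  have E1 : ∀ᵐ ω ∂S.P, ∀ j m k : ℕ,
      Tendsto (fun N : ℕ => (∑ i ∈ Finset.range N, f₁ j m k (S.samp i ω)) / N) atTop
        (𝓝 (∫ ξ, f₁ j m k ξ ∂S.μ)) := by
    rw [ae_all_iff]; intro j; rw [ae_all_iff]; intro m; rw [ae_all_iff]; intro k
    exact saa_slln S _ (hf₁meas j m k) k (hf₁0 j m k) (hf₁le j m k)
  have E2 : ∀ᵐ ω ∂S.P, ∀ j m k : ℕ,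
      Tendsto (fun N : ℕ => (∑ i ∈ Finset.range N,
          Set.indicator (C (D j) (((m : ℝ) + 1)⁻¹) (k : ℝ)) (fun _ => (1 : ℝ)) (S.samp i ω)) / N)
        atTop (𝓝 (∫ ξ, Set.indicator (C (D j) (((m : ℝ) + 1)⁻¹) (k : ℝ))
          (fun _ => (1 : ℝ)) ξ ∂S.μ)) := by
    rw [ae_all_iff]; intro j; rw [ae_all_iff]; intro m; rw [ae_all_iff]; intro k
    refine saa_slln S _ (Measurable.indicator measurable_const (measHelp _ _ _)) 1 ?_ ?_
    · intro ξ
      rw [Set.indicator_apply]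
      split <;> norm_num
    · intro ξ
      rw [Set.indicator_apply]
      split <;> norm_num
  filter_upwards [E1, E2] with ω h1 h2
  intro u₀ useq hu₀ huseq hws
  set w : W := S.B u₀ with hw
  have hwT : w ∈ T := ⟨u₀, hu₀, rfl⟩
  set wseq : ℕ → W := fun N => S.B (useq N) with hwseq
  have hwseqT : ∀ N, wseq N ∈ T := fun N => ⟨useq N, huseq N, rfl⟩
  have hwconv : Tendsto wseq atTop (𝓝 w) := S.B_wsc useq u₀ hws
  have hdistconv : ∀ ε > 0, ∀ᶠ N in atTop, dist (wseq N) w < ε := by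
    intro ε hε
    obtain ⟨N₀, hN₀⟩ := Metric.tendsto_atTop.1 hwconv ε hε
    exact eventually_atTop.2 ⟨N₀, hN₀⟩
  -- choice of approximating centers
  have hjex : ∀ m : ℕ, ∃ j, dist (D j) w < (2 * ((m : ℝ) + 1))⁻¹ := by
    intro m
    obtain ⟨j, hj⟩ := Metric.denseRange_iff.1 hD w ((2 * ((m : ℝ) + 1))⁻¹) (by positivity)
    exact ⟨j, by rwa [dist_comm]⟩
  choose j hj using hjex
  have hhalf : ∀ x : ℝ, (2 * x)⁻¹ = x⁻¹ / 2 := by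
    intro x
    rw [mul_inv_rev, div_eq_mul_inv]
  have harith : ∀ m : ℕ, ((m : ℝ) + 1)⁻¹ + (2 * ((m : ℝ) + 1))⁻¹ ≤ 2 * ((m : ℝ) + 1)⁻¹ := by
    intro m
    have hp : (0 : ℝ) ≤ ((m : ℝ) + 1)⁻¹ := by positivity
    rw [hhalf]
    linarith
  have hball : ∀ m : ℕ, ∀ᶠ N in atTop, wseq N ∈ Metric.ball (D (j m)) (((m : ℝ) + 1)⁻¹) := by
    intro m
    filter_upwards [hdistconv ((2 * ((m : ℝ) + 1))⁻¹) (by positivity)] with N hN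
    rw [Metric.mem_ball]
    have h3 : (2 * ((m : ℝ) + 1))⁻¹ + (2 * ((m : ℝ) + 1))⁻¹ = ((m : ℝ) + 1)⁻¹ := by
      rw [hhalf]
      ring
    calc dist (wseq N) (D (j m)) ≤ dist (wseq N) w + dist w (D (j m)) := dist_triangle _ _ _
      _ < (2 * ((m : ℝ) + 1))⁻¹ + (2 * ((m : ℝ) + 1))⁻¹ := by
          rw [dist_comm w (D (j m))]
          exact add_lt_add hN (hj m)
      _ = ((m : ℝ) + 1)⁻¹ := h3
  constructor
  · -- Part 1 : the objective liminf inequality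
    have key1 : ∀ m k : ℕ, ENNReal.ofReal (∫ ξ, f₁ (j m) m k ξ ∂S.μ) ≤
        atTop.liminf fun N => S.FN N ω (useq N) := by
      intro m k
      have hev : ∀ᶠ N in atTop,
          ENNReal.ofReal ((∑ i ∈ Finset.range N, f₁ (j m) m k (S.samp i ω)) / N) ≤
            S.FN N ω (useq N) := by
        filter_upwards [hball m, eventually_ge_atTop 1] with N hN hN1
        have hNpos : (0 : ℝ) < N := by exact_mod_cast hN1
        have hle : ∀ i ∈ Finset.range N,
            f₁ (j m) m k (S.samp i ω) ≤ S.J (wseq N) (S.samp i ω) := by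
          intro i _
          refine (min_le_right _ _).trans ?_
          exact csInf_le (hbdd _ _) ⟨wseq N, hN, rfl⟩
        have hFN : S.FN N ω (useq N) = (N : ℝ≥0∞)⁻¹ *
            ∑ i ∈ Finset.range N, ENNReal.ofReal (S.J (wseq N) (S.samp i ω)) := rfl
        rw [hFN, ENNReal.ofReal_div_of_pos hNpos, ENNReal.ofReal_natCast,
          ENNReal.div_eq_inv_mul,
          ENNReal.ofReal_sum_of_nonneg (fun i _ => hf₁0 (j m) m k _)]
        exact mul_le_mul_right
          (Finset.sum_le_sum fun i hi => ENNReal.ofReal_le_ofReal (hle i hi)) _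
      have hlim : Tendsto (fun N : ℕ =>
          ENNReal.ofReal ((∑ i ∈ Finset.range N, f₁ (j m) m k (S.samp i ω)) / N)) atTop
          (𝓝 (ENNReal.ofReal (∫ ξ, f₁ (j m) m k ξ ∂S.μ))) :=
        (ENNReal.continuous_ofReal.tendsto _).comp (h1 (j m) m k)
      calc ENNReal.ofReal (∫ ξ, f₁ (j m) m k ξ ∂S.μ)
          = atTop.liminf (fun N : ℕ =>
              ENNReal.ofReal ((∑ i ∈ Finset.range N, f₁ (j m) m k (S.samp i ω)) / N)) :=
            (hlim.liminf_eq).symm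
        _ ≤ atTop.liminf fun N => S.FN N ω (useq N) := liminf_le_liminf hev
    set g' : ℕ → Ξ → ℝ≥0∞ := fun n ξ => ENNReal.ofReal
      (min (n : ℝ) (sInf ((fun w' => S.J w' ξ) '' Metric.ball w (2 * ((n : ℝ) + 1)⁻¹)))) with hg'
    have hg'mono : Monotone g' := by
      apply monotone_nat_of_le_succ
      intro n ξ
      apply ENNReal.ofReal_le_ofReal
      apply min_le_min (by exact_mod_cast Nat.le_succ n)
      refine csInf_le_csInf (hbdd _ _)
        ⟨S.J w ξ, w, Metric.mem_ball_self (by positivity), rfl⟩ ?_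
      apply Set.image_mono
      apply Metric.ball_subset_ball
      have h1 : ((n : ℝ) + 1 + 1)⁻¹ ≤ ((n : ℝ) + 1)⁻¹ := by
        apply inv_anti₀ (by positivity)
        push_cast
        linarith
      push_cast
      linarith
    have hg'meas : ∀ n, Measurable (g' n) := fun n =>
      ENNReal.measurable_ofReal.comp
        (measurable_const.min (saa_measInf S w _ (by positivity)))
    have hsup : ∀ ξ, ENNReal.ofReal (S.J w ξ) ≤ ⨆ n, g' n ξ := by
      intro ξ
      by_contra hcon
      push_neg at hcon
      set L := ⨆ n, g' n ξ with hL
      have hLtop : L ≠ ⊤ := ne_top_of_lt hcon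
      have hLt : L.toReal < S.J w ξ := (ENNReal.lt_ofReal_iff_toReal_lt hLtop).1 hcon
      set t := (L.toReal + S.J w ξ) / 2 with htdef
      have ht1 : L.toReal < t := by rw [htdef]; linarith
      have ht2 : t < S.J w ξ := by rw [htdef]; linarith
      have hlsc : ∀ᶠ w' in 𝓝 w, t < S.J w' ξ := S.J_lsc ξ w t ht2
      obtain ⟨ε, hε, hball'⟩ := Metric.eventually_nhds_iff_ball.1 hlsc
      obtain ⟨n₁, hn₁⟩ := exists_nat_gt (2 / ε)
      obtain ⟨n₂, hn₂⟩ := exists_nat_gt t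
      set n := max n₁ n₂ with hn
      have hrad : 2 * ((n : ℝ) + 1)⁻¹ < ε := by
        have hn₁' : (n₁ : ℝ) ≤ (n : ℝ) := by exact_mod_cast le_max_left n₁ n₂
        have h2e : 2 / ε < (n : ℝ) + 1 := by linarith
        have h1 : 2 < ((n : ℝ) + 1) * ε := (div_lt_iff₀ hε).1 h2e
        have hp : (0 : ℝ) < (n : ℝ) + 1 := by positivity
        rw [show (2 : ℝ) * ((n : ℝ) + 1)⁻¹ = 2 / ((n : ℝ) + 1) from (div_eq_mul_inv 2 _).symm,
          div_lt_iff₀ hp]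
        linarith [mul_comm ε ((n : ℝ) + 1)]
      have hts : t ≤ sInf ((fun w' => S.J w' ξ) '' Metric.ball w (2 * ((n : ℝ) + 1)⁻¹)) := by
        refine le_csInf ⟨S.J w ξ, w, Metric.mem_ball_self (by positivity), rfl⟩ ?_
        rintro x ⟨w', hw', rfl⟩
        exact (hball' w' (Metric.ball_subset_ball hrad.le hw')).le
      have htn : t ≤ (n : ℝ) := by
        have : (n₂ : ℝ) ≤ (n : ℝ) := by exact_mod_cast le_max_right n₁ n₂
        linarith
      have hg1 : ENNReal.ofReal t ≤ g' n ξ := ENNReal.ofReal_le_ofReal (le_min htn hts)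
      have hg2 : g' n ξ ≤ L := le_iSup (fun n => g' n ξ) n
      have hg3 : L < ENNReal.ofReal t := (ENNReal.lt_ofReal_iff_toReal_lt hLtop).2 ht1
      exact absurd (hg1.trans hg2) hg3.not_ge
    have hfg : ∀ n ξ, g' n ξ ≤ ENNReal.ofReal (f₁ (j n) n n ξ) := by
      intro n ξ
      apply ENNReal.ofReal_le_ofReal
      apply min_le_min (le_refl (n : ℝ))
      refine csInf_le_csInf (hbdd _ _)
        ⟨S.J (D (j n)) ξ, D (j n), Metric.mem_ball_self (by positivity), rfl⟩ ?_
      apply Set.image_mono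
      intro x hx
      rw [Metric.mem_ball] at hx ⊢
      calc dist x w ≤ dist x (D (j n)) + dist (D (j n)) w := dist_triangle _ _ _
        _ < ((n : ℝ) + 1)⁻¹ + (2 * ((n : ℝ) + 1))⁻¹ := add_lt_add hx (hj n)
        _ ≤ 2 * ((n : ℝ) + 1)⁻¹ := harith n
    have hf₁int : ∀ j' m k : ℕ, Integrable (f₁ j' m k) S.μ := by
      intro j' m k
      refine (integrable_const (k : ℝ)).mono' (hf₁meas j' m k).aestronglyMeasurable ?_
      filter_upwards with ξ
      rw [Real.norm_eq_abs, abs_of_nonneg (hf₁0 j' m k ξ)]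
      exact hf₁le j' m k ξ
    have hF : S.F u₀ = ∫⁻ ξ, ENNReal.ofReal (S.J w ξ) ∂S.μ := rfl
    rw [hF]
    calc ∫⁻ ξ, ENNReal.ofReal (S.J w ξ) ∂S.μ
        ≤ ∫⁻ ξ, ⨆ n, g' n ξ ∂S.μ := lintegral_mono hsup
      _ = ⨆ n, ∫⁻ ξ, g' n ξ ∂S.μ := lintegral_iSup hg'meas hg'mono
      _ ≤ ⨆ n, ∫⁻ ξ, ENNReal.ofReal (f₁ (j n) n n ξ) ∂S.μ :=
          iSup_mono fun n => lintegral_mono (hfg n)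
      _ = ⨆ n, ENNReal.ofReal (∫ ξ, f₁ (j n) n n ξ ∂S.μ) := by
          refine iSup_congr fun n => ?_
          rw [ofReal_integral_eq_lintegral_ofReal (hf₁int (j n) n n)
            (Filter.Eventually.of_forall fun ξ => hf₁0 (j n) n n ξ)]
      _ ≤ atTop.liminf fun N => S.FN N ω (useq N) := iSup_le fun n => key1 n n
  · -- Part 2 : the feasibility-indicator liminf inequality
    by_cases hA0 : S.μ {ξ | S.G w ξ ∉ S.K} = 0
    · have hz : ∫⁻ ξ, iInd (S.Uset ξ) u₀ ∂S.μ = 0 := by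
        have hae : ∀ᵐ ξ ∂S.μ, iInd (S.Uset ξ) u₀ = 0 := by
          rw [ae_iff]
          apply measure_mono_null _ hA0
          intro ξ hξ
          simp only [Set.mem_setOf_eq] at hξ ⊢
          by_contra hmem
          apply hξ
          have : u₀ ∈ S.Uset ξ := hmem
          simp [iInd, this]
        rw [lintegral_congr_ae hae, lintegral_zero]
      rw [hz]
      exact zero_le
    · -- positive probability of infeasibility at `u₀`
      set A' : ℕ → Set Ξ := fun n => C w (((n : ℝ) + 1)⁻¹) (n : ℝ) with hA'
      have hsubA : {ξ | S.G w ξ ∉ S.K} ⊆ ⋃ n, A' n := by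
        intro ξ hξ
        simp only [Set.mem_setOf_eq] at hξ
        have hδ : 0 < Metric.infDist (S.G w ξ) S.K :=
          (S.K_closed.notMem_iff_infDist_pos S.K_ne).1 hξ
        set δ := Metric.infDist (S.G w ξ) S.K with hδdef
        have hcont : Tendsto (fun w' => Metric.infDist (S.G w' ξ) S.K) (𝓝[T] w) (𝓝 δ) :=
          ((Metric.continuous_infDist_pt S.K).tendsto _).comp (S.G_contOn ξ w hwT)
        have hev : ∀ᶠ w' in 𝓝[T] w, δ / 2 < Metric.infDist (S.G w' ξ) S.K :=
          hcont.eventually (eventually_gt_nhds (by linarith))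
        obtain ⟨ρ, hρ, hsub⟩ := Metric.mem_nhdsWithin_iff.1 hev
        obtain ⟨n₁, hn₁⟩ := exists_nat_gt (2 / δ)
        obtain ⟨n₂, hn₂⟩ := exists_nat_gt (1 / ρ)
        refine Set.mem_iUnion.2 ⟨max n₁ n₂, Set.mem_iInter.2 fun i hd => ?_⟩
        set n := max n₁ n₂ with hn
        have hinv : ((n : ℝ) + 1)⁻¹ < ρ := by
          apply aux_inv_lt hρ
          have : (n₂ : ℝ) ≤ (n : ℝ) := by exact_mod_cast le_max_right n₁ n₂
          linarith
        have hdρ : dist (e i) w < ρ := lt_trans hd hinv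
        have hei : δ / 2 < Metric.infDist (S.G (e i) ξ) S.K :=
          hsub ⟨Metric.mem_ball.2 hdρ, heT i⟩
        have hnδ : 2 / δ < (n : ℝ) := by
          have : (n₁ : ℝ) ≤ (n : ℝ) := by exact_mod_cast le_max_left n₁ n₂
          linarith
        have h2 : 2 < (n : ℝ) * δ := by
          rw [div_lt_iff₀ hδ] at hnδ
          linarith [mul_comm (n : ℝ) δ]
        have hn0 : (0 : ℝ) ≤ (n : ℝ) := Nat.cast_nonneg n
        nlinarith [hei, h2, hn0]
      have hpos : ∃ n, S.μ (A' n) ≠ 0 := by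
        by_contra hall
        push_neg at hall
        exact hA0 (measure_mono_null hsubA (measure_iUnion_null hall))
      obtain ⟨n, hn⟩ := hpos
      set m := 2 * n + 2 with hm
      have hsubC : A' n ⊆ C (D (j m)) (((m : ℝ) + 1)⁻¹) (n : ℝ) := by
        intro ξ hξ
        refine Set.mem_iInter.2 fun i => fun hd => ?_
        refine Set.mem_iInter.1 hξ i ?_
        have hmcast : (m : ℝ) = 2 * (n : ℝ) + 2 := by rw [hm]; push_cast; ring
        have harith2 : ((m : ℝ) + 1)⁻¹ + (2 * ((m : ℝ) + 1))⁻¹ ≤ ((n : ℝ) + 1)⁻¹ := by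
          rw [hmcast]
          have hp1 : (0 : ℝ) < 2 * (n : ℝ) + 2 + 1 := by positivity
          have hp2 : (0 : ℝ) < 2 * ((n : ℝ) + 1) := by positivity
          have e1 : (2 * (n : ℝ) + 2 + 1)⁻¹ ≤ (2 * ((n : ℝ) + 1))⁻¹ :=
            inv_anti₀ hp2 (by linarith)
          have e2 : (2 * (2 * (n : ℝ) + 2 + 1))⁻¹ ≤ (2 * ((n : ℝ) + 1))⁻¹ :=
            inv_anti₀ hp2 (by linarith)
          have e3 : (2 * ((n : ℝ) + 1))⁻¹ + (2 * ((n : ℝ) + 1))⁻¹ = ((n : ℝ) + 1)⁻¹ := by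
            rw [hhalf]; ring
          linarith
        calc dist (e i) w ≤ dist (e i) (D (j m)) + dist (D (j m)) w := dist_triangle _ _ _
          _ < ((m : ℝ) + 1)⁻¹ + (2 * ((m : ℝ) + 1))⁻¹ := add_lt_add hd (hj m)
          _ ≤ ((n : ℝ) + 1)⁻¹ := harith2
      have hμC : S.μ (C (D (j m)) (((m : ℝ) + 1)⁻¹) (n : ℝ)) ≠ 0 := fun h =>
        hn (measure_mono_null hsubC h)
      have hintC : ∫ ξ, Set.indicator (C (D (j m)) (((m : ℝ) + 1)⁻¹) (n : ℝ))
          (fun _ => (1 : ℝ)) ξ ∂S.μ = (S.μ (C (D (j m)) (((m : ℝ) + 1)⁻¹) (n : ℝ))).toReal := by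
        rw [integral_indicator_const (1 : ℝ) (measHelp _ _ _)]
        simp [Measure.real]
      have hTC := h2 (j m) m n
      rw [hintC] at hTC
      have hpos' : 0 < (S.μ (C (D (j m)) (((m : ℝ) + 1)⁻¹) (n : ℝ))).toReal :=
        ENNReal.toReal_pos hμC (measure_ne_top S.μ _)
      have hevC : ∀ᶠ N in atTop, ∃ i ∈ Finset.range N,
          S.samp i ω ∈ C (D (j m)) (((m : ℝ) + 1)⁻¹) (n : ℝ) := by
        filter_upwards [hTC.eventually (eventually_gt_nhds (half_lt_self hpos'))] with N hN
        by_contra hno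
        push_neg at hno
        have hzero : ∀ i ∈ Finset.range N, Set.indicator
            (C (D (j m)) (((m : ℝ) + 1)⁻¹) (n : ℝ)) (fun _ => (1 : ℝ)) (S.samp i ω) = 0 :=
          fun i hi => Set.indicator_of_notMem (hno i hi) _
        rw [Finset.sum_congr rfl hzero, Finset.sum_const_zero, zero_div] at hN
        linarith
      have hevtop : ∀ᶠ N : ℕ in atTop, ((N : ℝ≥0∞)⁻¹ *
          ∑ i ∈ Finset.range N, iInd (S.Uset (S.samp i ω)) (useq N)) = ⊤ := by
        filter_upwards [hevC, hball m, eventually_ge_atTop 1] with N hC' hB' hN1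
        obtain ⟨i, hiN, hiC⟩ := hC'
        have hnotK : S.G (wseq N) (S.samp i ω) ∉ S.K := by
          have hp := propHelp (D (j m)) (((m : ℝ) + 1)⁻¹) (n : ℝ) _ hiC (wseq N)
            (hwseqT N) (Metric.mem_ball.1 hB')
          intro hmem
          rw [Metric.infDist_zero_of_mem hmem, mul_zero] at hp
          linarith
        have hterm : iInd (S.Uset (S.samp i ω)) (useq N) = ⊤ := by
          have hnm : useq N ∉ S.Uset (S.samp i ω) := hnotK
          simp [iInd, hnm]
        have hsum : ∑ i' ∈ Finset.range N, iInd (S.Uset (S.samp i' ω)) (useq N) = ⊤ := by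
          apply top_le_iff.1
          calc (⊤ : ℝ≥0∞) = iInd (S.Uset (S.samp i ω)) (useq N) := hterm.symm
            _ ≤ ∑ i' ∈ Finset.range N, iInd (S.Uset (S.samp i' ω)) (useq N) :=
              Finset.single_le_sum
                (f := fun i' => iInd (S.Uset (S.samp i' ω)) (useq N))
                (fun i' _ => zero_le) hiN
        rw [hsum, ENNReal.mul_top (ENNReal.inv_ne_zero.2 (ENNReal.natCast_ne_top N))]
      have htopliminf : (⊤ : ℝ≥0∞) ≤ atTop.liminf fun N : ℕ => (N : ℝ≥0∞)⁻¹ *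
          ∑ i ∈ Finset.range N, iInd (S.Uset (S.samp i ω)) (useq N) :=
        le_liminf_of_le (by isBoundedDefault) (hevtop.mono fun N hN => hN.ge)
      exact le_trans le_top htopliminf
end
end

section
/- Under the standing setup (Assumption 1) and Assumption 3, suppose the cone 𝒦 := {r ∈ C(Ξ;R) : r(ξ) ∈ K for all ξ ∈ Ξ} has nonempty interior, and let u* be a local optimum of problem (P) at which the constraint qualification (CQ) holds: there exists û ∈ dom ψ with 𝒢(u*) + D𝒢(u*)(û − u*) ∈ int 𝒦. Then there exists a Lagrange multiplier λ* ∈ C(Ξ;R)* such that 0 ∈ DF(u*) + ∂ψ(u*) + D𝒢(u*)*λ*, λ* ∈ 𝒦⁻, and ⟨λ*, 𝒢(u*)⟩ = 0. -/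
open MeasureTheory Filter Topology TopologicalSpace
open scoped ENNReal

noncomputable section

/-- Assumption 3 of the paper: compact sample space, smooth objective and constraint. -/
structure Assumption3 {X W R R₀ Ξ Ω : Type*}
    [NormedAddCommGroup X] [NormedSpace ℝ X]
    [NormedAddCommGroup W] [NormedSpace ℝ W]
    [NormedAddCommGroup R] [NormedSpace ℝ R]
    [NormedAddCommGroup R₀] [NormedSpace ℝ R₀]
    [MeasurableSpace R] [BorelSpace R] [MeasurableSpace R₀] [BorelSpace R₀]
    [MetricSpace Ξ] [CompactSpace Ξ] [MeasurableSpace Ξ] [BorelSpace Ξ]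
    [MeasurableSpace Ω]
    (S : StandingSetup X W R R₀ Ξ Ω) : Type _ where
  /-- the open set `U₀ ⊃ dom ψ` -/
  U₀ : Set (StrongDual ℝ X)
  U₀_open : IsOpen U₀
  dom_sub : {u | S.ψ u ≠ ⊤} ⊆ U₀
  /-- the open set `W₀ ⊃ B(U₀)` -/
  W₀ : Set W
  W₀_open : IsOpen W₀
  BU₀_sub : S.B '' U₀ ⊆ W₀
  /-- the Fréchet derivative `D_w𝒥` of the objective integrand -/
  DJ : W → Ξ → (W →L[ℝ] ℝ)
  DJ_deriv : ∀ ξ : Ξ, ∀ w ∈ W₀, HasFDerivAt (fun w' => S.J w' ξ) (DJ w ξ) w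
  DJ_cont : ∀ ξ : Ξ, ContinuousOn (fun w => DJ w ξ) W₀
  DJ_meas : ∀ w ∈ W₀, ∀ h : W, Measurable fun ξ => DJ w ξ h
  /-- the integrable bound `L` on `‖D_w𝒥‖` -/
  L : Ξ → ℝ
  L_int : Integrable L S.μ
  DJ_bound : ∀ w ∈ W₀, ∀ ξ : Ξ, ‖DJ w ξ‖ ≤ L ξ
  /-- the Fréchet derivative `D_w𝒢` of the constraint map -/
  DG : W → Ξ → (W →L[ℝ] R)
  DG_deriv : ∀ ξ : Ξ, ∀ w ∈ W₀, HasFDerivAt (fun w' => S.G w' ξ) (DG w ξ) w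
  DG_meas : ∀ w ∈ W₀, ∀ h : W, Measurable fun ξ => DG w ξ h
  /-- joint continuity of `𝒢` on `B(U₀) × Ξ` -/
  G_jcont : ContinuousOn (fun p : W × Ξ => S.G p.1 p.2) ((S.B '' U₀) ×ˢ Set.univ)
  /-- joint continuity of `D_w𝒢` on `B(U₀) × Ξ` -/
  DG_jcont : ContinuousOn (fun p : W × Ξ => DG p.1 p.2) ((S.B '' U₀) ×ˢ Set.univ)

namespace StandingSetup

variable {X W R R₀ Ξ Ω : Type*}
    [NormedAddCommGroup X] [NormedSpace ℝ X]
    [NormedAddCommGroup W] [NormedSpace ℝ W]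
    [NormedAddCommGroup R] [NormedSpace ℝ R]
    [NormedAddCommGroup R₀] [NormedSpace ℝ R₀]
    [MeasurableSpace R] [BorelSpace R] [MeasurableSpace R₀] [BorelSpace R₀]
    [MetricSpace Ξ] [CompactSpace Ξ] [MeasurableSpace Ξ] [BorelSpace Ξ]
    [MeasurableSpace Ω]
    (S : StandingSetup X W R R₀ Ξ Ω)

/-- the cone `𝒦 = {r ∈ C(Ξ;R) ∣ r(ξ) ∈ K for all ξ}` -/
def coneC : Set (ContinuousMap Ξ R) := {r | ∀ ξ, r ξ ∈ S.K}

/-- the convex subdifferential `∂ψ(u) ⊂ U*` of the regularizer -/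
def subdiff (u : StrongDual ℝ X) :
    Set (StrongDual ℝ (StrongDual ℝ X)) :=
  {η | S.ψ u ≠ ⊤ ∧ ∀ v, S.ψ v ≠ ⊤ → (S.ψ u).toReal + η (v - u) ≤ (S.ψ v).toReal}

variable (A : Assumption3 S)

/-- the KKT conditions of problem (P) at `(u, λ)`:
`0 ∈ DF(u) + ∂ψ(u) + D𝒢(u)*λ`, `λ ∈ 𝒦⁻`, `⟨λ, 𝒢(u)⟩ = 0`. -/
def KKTP (Gc : StrongDual ℝ X → ContinuousMap Ξ R)
    (DGc : StrongDual ℝ X → StrongDual ℝ X → ContinuousMap Ξ R)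
    (u : StrongDual ℝ X) (lam : StrongDual ℝ (ContinuousMap Ξ R)) : Prop :=
  (∃ η ∈ S.subdiff u, ∀ h : StrongDual ℝ X,
      (∫ ξ, A.DJ (S.B u) ξ (S.B h) ∂S.μ) + η h + lam (DGc u h) = 0) ∧
  (∀ k : ContinuousMap Ξ R, (∀ ξ, k ξ ∈ S.K) → lam k ≤ 0) ∧
  lam (Gc u) = 0

/-- the aggregated SAA KKT conditions (4.6) at `(u, λ)` for sample size `N` -/
def AggKKT (Gc : StrongDual ℝ X → ContinuousMap Ξ R)
    (DGc : StrongDual ℝ X → StrongDual ℝ X → ContinuousMap Ξ R)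
    (N : ℕ) (ω : Ω) (u : StrongDual ℝ X)
    (lam : StrongDual ℝ (ContinuousMap Ξ R)) : Prop :=
  (∃ η ∈ S.subdiff u, ∀ h : StrongDual ℝ X,
      ((N : ℝ)⁻¹ * ∑ i ∈ Finset.range N, A.DJ (S.B u) (S.samp i ω) (S.B h))
        + η h + lam (DGc u h) = 0) ∧
  (∀ k : ContinuousMap Ξ R, (∀ ξ, k ξ ∈ S.K) → lam k ≤ 0) ∧
  lam (Gc u) = 0 ∧
  ∀ i ∈ Finset.range N, S.G (S.B u) (S.samp i ω) ∈ S.K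

/-- the constraint qualification (CQ) of the paper at `u`:
there is `û ∈ dom ψ` with `𝒢(u) + D𝒢(u)(û − u) ∈ int 𝒦`. -/
def CQ (Gc : StrongDual ℝ X → ContinuousMap Ξ R)
    (DGc : StrongDual ℝ X → StrongDual ℝ X → ContinuousMap Ξ R)
    (u : StrongDual ℝ X) : Prop :=
  ∃ uhat, S.ψ uhat ≠ ⊤ ∧ Gc u + DGc u (uhat - u) ∈ interior S.coneC

end StandingSetup
section KKTAux

variable {X W R R₀ Ξ Ω : Type*}
    [NormedAddCommGroup X] [NormedSpace ℝ X]
    [NormedAddCommGroup W] [NormedSpace ℝ W]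
    [NormedAddCommGroup R] [NormedSpace ℝ R]
    [NormedAddCommGroup R₀] [NormedSpace ℝ R₀]
    [MeasurableSpace R] [BorelSpace R] [MeasurableSpace R₀] [BorelSpace R₀]
    [MetricSpace Ξ] [MeasurableSpace Ξ] [BorelSpace Ξ]
    [MeasurableSpace Ω]
    (S : StandingSetup X W R R₀ Ξ Ω)

include S in
theorem KKTaux.nonempty_Xi : Nonempty Ξ := by
  by_contra h
  rw [not_nonempty_iff] at h
  have h1 : S.μ Set.univ = 1 := S.hμ.measure_univ
  have h0 : (Set.univ : Set Ξ) = ∅ := Set.univ_eq_empty_iff.mpr h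
  rw [h0] at h1
  simp at h1

theorem KKTaux.B_cont : Continuous S.B := by
  rw [continuous_iff_seqContinuous]
  intro x a hx
  exact S.B_wsc x a fun p =>
    (((ContinuousLinearMap.apply ℝ ℝ p).continuous.tendsto a).comp hx)

theorem KKTaux.dom_convex : Convex ℝ {u : StrongDual ℝ X | S.ψ u ≠ ⊤} := by
  intro u hu v hv a b ha hb hab
  have hb' : b = 1 - a := by linarith
  have h := S.ψ_convex u v a ha (by linarith)
  rw [← hb'] at h
  simp only [Set.mem_setOf_eq] at hu hv ⊢
  exact ne_top_of_le_ne_top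
    (ENNReal.add_ne_top.mpr ⟨ENNReal.mul_ne_top ENNReal.ofReal_ne_top hu,
      ENNReal.mul_ne_top ENNReal.ofReal_ne_top hv⟩) h

theorem KKTaux.zero_mem_K : (0 : R) ∈ S.K := by
  obtain ⟨r, hr⟩ := S.K_ne
  simpa using S.K_cone 0 r le_rfl hr

theorem KKTaux.K_add {a b : R} (ha : a ∈ S.K) (hb : b ∈ S.K) : a + b ∈ S.K := by
  have hm : (1/2 : ℝ) • a + (1/2 : ℝ) • b ∈ S.K :=
    S.K_convex ha hb (by norm_num) (by norm_num) (by norm_num)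
  have := S.K_cone 2 _ (by norm_num) hm
  simpa [smul_add, smul_smul] using this

theorem KKTaux.J_meas (w : W) : Measurable fun ξ => S.J w ξ := by
  apply measurable_of_Iic
  intro c
  have hset : (fun ξ => S.J w ξ) ⁻¹' Set.Iic c =
      ⋂ n : ℕ, {ξ | ∃ p ∈ (Metric.ball w (1/(n+1)) ×ˢ Set.Iio (c + 1/(n+1))),
        S.J p.1 ξ ≤ p.2} := by
    ext ξ
    simp only [Set.mem_preimage, Set.mem_Iic, Set.mem_iInter, Set.mem_setOf_eq]
    constructor
    · intro h n
      have hnpos : (0:ℝ) < (n:ℝ)+1 := by positivity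
      refine ⟨(w, c + 1/(2*((n:ℝ)+1))), ⟨?_, ?_⟩, ?_⟩
      · simpa [Metric.mem_ball] using by positivity
      · simp only [Set.mem_Iio]
        have : 1/(2*((n:ℝ)+1)) < 1/((n:ℝ)+1) :=
          one_div_lt_one_div_of_lt hnpos (by linarith)
        linarith
      · have : (0:ℝ) < 1/(2*((n:ℝ)+1)) := by positivity
        simp only
        linarith
    · intro h
      by_contra hc
      push_neg at hc
      set y := (c + S.J w ξ)/2 with hy
      have hyc : c < y := by rw [hy]; linarith
      have hyJ : y < S.J w ξ := by rw [hy]; linarith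
      have hev := S.J_lsc ξ w y hyJ
      rw [Metric.eventually_nhds_iff] at hev
      obtain ⟨δ, hδ, hball⟩ := hev
      obtain ⟨n, hn⟩ := exists_nat_gt (max (1/δ) (1/(y - c)))
      obtain ⟨⟨w', a⟩, ⟨hw', ha⟩, hJ⟩ := h n
      have hnpos : (0:ℝ) < (n:ℝ)+1 := by positivity
      have hmax1 : 1/δ < (n:ℝ)+1 :=
        lt_of_le_of_lt (le_max_left _ _) (hn.trans (lt_add_one _))
      have hmax2 : 1/(y-c) < (n:ℝ)+1 :=
        lt_of_le_of_lt (le_max_right _ _) (hn.trans (lt_add_one _))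
      have hycpos : (0:ℝ) < y - c := by linarith
      have hn1 : 1/((n:ℝ)+1) < δ := by
        rw [div_lt_iff₀ hδ] at hmax1
        rw [div_lt_iff₀ hnpos]
        linarith
      have hn2 : 1/((n:ℝ)+1) < y - c := by
        rw [div_lt_iff₀ hycpos] at hmax2
        rw [div_lt_iff₀ hnpos]
        linarith
      have hw'' : dist w' w < δ := lt_trans (by simpa [Metric.mem_ball] using hw') hn1
      have := hball hw''
      simp only [Set.mem_Iio] at ha
      linarith
  rw [hset]
  exact MeasurableSet.iInter fun n =>
    S.J_effros _ ((Metric.isOpen_ball).prod isOpen_Iio)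

end KKTAux
section KKTAux2

variable {X W R R₀ Ξ Ω : Type*}
    [NormedAddCommGroup X] [NormedSpace ℝ X]
    [NormedAddCommGroup W] [NormedSpace ℝ W]
    [NormedAddCommGroup R] [NormedSpace ℝ R]
    [NormedAddCommGroup R₀] [NormedSpace ℝ R₀]
    [MeasurableSpace R] [BorelSpace R] [MeasurableSpace R₀] [BorelSpace R₀]
    [MetricSpace Ξ] [CompactSpace Ξ] [MeasurableSpace Ξ] [BorelSpace Ξ]
    [MeasurableSpace Ω]
    (S : StandingSetup X W R R₀ Ξ Ω) (A : Assumption3 S)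

theorem KKTaux.B_mem_W0 {u : StrongDual ℝ X} (hu : S.ψ u ≠ ⊤) :
    S.B u ∈ A.W₀ := A.BU₀_sub ⟨u, A.dom_sub hu, rfl⟩

theorem KKTaux.B_segment_sub_W0 {u₁ u₂ : StrongDual ℝ X}
    (h1 : S.ψ u₁ ≠ ⊤) (h2 : S.ψ u₂ ≠ ⊤) {z : W}
    (hz : z ∈ segment ℝ (S.B u₁) (S.B u₂)) : z ∈ A.W₀ := by
  obtain ⟨a, b, ha, hb, hab, rfl⟩ := hz
  have : a • u₁ + b • u₂ ∈ {u : StrongDual ℝ X | S.ψ u ≠ ⊤} :=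
    KKTaux.dom_convex S h1 h2 ha hb hab
  have heq : a • S.B u₁ + b • S.B u₂ = S.B (a • u₁ + b • u₂) := by
    rw [map_add]; rw [LinearMap.map_smul, LinearMap.map_smul]
  rw [heq]
  exact KKTaux.B_mem_W0 S A this

theorem KKTaux.J_lip {u₁ u₂ : StrongDual ℝ X}
    (h1 : S.ψ u₁ ≠ ⊤) (h2 : S.ψ u₂ ≠ ⊤) (ξ : Ξ) :
    ‖S.J (S.B u₂) ξ - S.J (S.B u₁) ξ‖ ≤ A.L ξ * ‖S.B u₂ - S.B u₁‖ := by
  refine Convex.norm_image_sub_le_of_norm_hasFDerivWithin_le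
    (f := fun w => S.J w ξ) (f' := fun w => A.DJ w ξ)
    (s := segment ℝ (S.B u₁) (S.B u₂)) (fun x hx => ?_) (fun x hx => ?_)
    (convex_segment _ _) (left_mem_segment _ _ _) (right_mem_segment _ _ _)
  · exact (A.DJ_deriv ξ x (KKTaux.B_segment_sub_W0 S A h1 h2 hx)).hasFDerivWithinAt
  · exact A.DJ_bound x (KKTaux.B_segment_sub_W0 S A h1 h2 hx) ξ

include A in
theorem KKTaux.J_integrable {u : StrongDual ℝ X} (hu : S.ψ u ≠ ⊤) :
    Integrable (fun ξ => S.J (S.B u) ξ) S.μ := by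
  obtain ⟨u₀, _, hne⟩ := S.feas_pt
  rw [ENNReal.add_ne_top] at hne
  obtain ⟨hF0, hψ0⟩ := hne
  have hmeas0 : Measurable fun ξ => S.J (S.B u₀) ξ := KKTaux.J_meas S _
  have hint0 : Integrable (fun ξ => S.J (S.B u₀) ξ) S.μ := by
    refine ⟨hmeas0.aestronglyMeasurable, ?_⟩
    rw [hasFiniteIntegral_iff_ofReal (Eventually.of_forall fun ξ => S.J_nonneg _ ξ)]
    exact lt_top_iff_ne_top.mpr hF0
  refine Integrable.mono'
    (g := fun ξ => S.J (S.B u₀) ξ + A.L ξ * ‖S.B u - S.B u₀‖)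
    (hint0.add (A.L_int.mul_const _)) ((KKTaux.J_meas S _).aestronglyMeasurable)
    (Eventually.of_forall fun ξ => ?_)
  have hlip := KKTaux.J_lip S A hψ0 hu ξ
  have h1 := S.J_nonneg (S.B u) ξ
  have h2 := S.J_nonneg (S.B u₀) ξ
  rw [Real.norm_of_nonneg h1]
  have := abs_le.mp (by rwa [Real.norm_eq_abs] at hlip)
  linarith [this.2]

include A in
theorem KKTaux.F_eq {u : StrongDual ℝ X} (hu : S.ψ u ≠ ⊤) :
    S.F u = ENNReal.ofReal (∫ ξ, S.J (S.B u) ξ ∂S.μ) :=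
  (ofReal_integral_eq_lintegral_ofReal (KKTaux.J_integrable S A hu)
    (Eventually.of_forall fun ξ => S.J_nonneg _ ξ)).symm

include A in
theorem KKTaux.F_ne_top {u : StrongDual ℝ X} (hu : S.ψ u ≠ ⊤) :
    S.F u ≠ ⊤ := by
  rw [KKTaux.F_eq S A hu]; exact ENNReal.ofReal_ne_top

include A in
theorem KKTaux.F_toReal {u : StrongDual ℝ X} (hu : S.ψ u ≠ ⊤) :
    (S.F u).toReal = ∫ ξ, S.J (S.B u) ξ ∂S.μ := by
  rw [KKTaux.F_eq S A hu]
  exact ENNReal.toReal_ofReal (integral_nonneg fun ξ => S.J_nonneg _ ξ)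

theorem KKTaux.DJ_integrable {u : StrongDual ℝ X} (hu : S.ψ u ≠ ⊤) (z : W) :
    Integrable (fun ξ => A.DJ (S.B u) ξ z) S.μ := by
  refine Integrable.mono' (g := fun ξ => A.L ξ * ‖z‖) (A.L_int.mul_const _)
    (A.DJ_meas _ (KKTaux.B_mem_W0 S A hu) z).aestronglyMeasurable
    (Eventually.of_forall fun ξ => ?_)
  calc ‖A.DJ (S.B u) ξ z‖ ≤ ‖A.DJ (S.B u) ξ‖ * ‖z‖ := (A.DJ (S.B u) ξ).le_opNorm z
  _ ≤ A.L ξ * ‖z‖ := by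
      have := A.DJ_bound _ (KKTaux.B_mem_W0 S A hu) ξ
      have hz : (0:ℝ) ≤ ‖z‖ := norm_nonneg _
      nlinarith [norm_nonneg (A.DJ (S.B u) ξ)]

end KKTAux2
section KKTAux3
set_option linter.unusedSectionVars false

variable {X W R R₀ Ξ Ω : Type*}
    [NormedAddCommGroup X] [NormedSpace ℝ X]
    [NormedAddCommGroup W] [NormedSpace ℝ W]
    [NormedAddCommGroup R] [NormedSpace ℝ R]
    [NormedAddCommGroup R₀] [NormedSpace ℝ R₀]
    [MeasurableSpace R] [BorelSpace R] [MeasurableSpace R₀] [BorelSpace R₀]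
    [MetricSpace Ξ] [CompactSpace Ξ] [MeasurableSpace Ξ] [BorelSpace Ξ]
    [MeasurableSpace Ω]
    (S : StandingSetup X W R R₀ Ξ Ω)

theorem KKTaux.coneC_convex : Convex ℝ S.coneC := by
  intro k₁ h₁ k₂ h₂ a b ha hb hab
  intro ξ
  simpa using S.K_convex (h₁ ξ) (h₂ ξ) ha hb hab

theorem KKTaux.coneC_smul {c : ℝ} (hc : 0 ≤ c) {k : ContinuousMap Ξ R}
    (hk : k ∈ S.coneC) : c • k ∈ S.coneC := by
  intro ξ
  simpa using S.K_cone c (k ξ) hc (hk ξ)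

theorem KKTaux.coneC_add {k₁ k₂ : ContinuousMap Ξ R}
    (h₁ : k₁ ∈ S.coneC) (h₂ : k₂ ∈ S.coneC) : k₁ + k₂ ∈ S.coneC := by
  intro ξ
  simpa using KKTaux.K_add S (h₁ ξ) (h₂ ξ)

theorem KKTaux.interior_add_cone {k k' : ContinuousMap Ξ R}
    (hk : k ∈ interior S.coneC) (hk' : k' ∈ S.coneC) :
    k + k' ∈ interior S.coneC := by
  obtain ⟨V, hVsub, hVopen, hkV⟩ := mem_interior.mp hk
  refine mem_interior.mpr ⟨(fun x => x + k') '' V, ?_, (isOpenMap_add_right k') V hVopen,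
    ⟨k, hkV, rfl⟩⟩
  rintro _ ⟨x, hx, rfl⟩
  exact KKTaux.coneC_add S (hVsub hx) hk'

theorem KKTaux.interior_smul_cone {c : ℝ} (hc : 0 < c) {k : ContinuousMap Ξ R}
    (hk : k ∈ interior S.coneC) : c • k ∈ interior S.coneC := by
  obtain ⟨V, hVsub, hVopen, hkV⟩ := mem_interior.mp hk
  refine mem_interior.mpr ⟨(fun x => c • x) '' V, ?_, isOpenMap_smul₀ (ne_of_gt hc) V hVopen,
    ⟨k, hkV, rfl⟩⟩
  rintro _ ⟨x, hx, rfl⟩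
  exact KKTaux.coneC_smul S hc.le (hVsub hx)

theorem KKTaux.interior_margin {h : ContinuousMap Ξ R} (hh : h ∈ interior S.coneC) :
    ∃ δ : ℝ, 0 < δ ∧ ∀ (ξ : Ξ) (r : R), ‖r‖ < δ → h ξ + r ∈ S.K := by
  have : Nonempty Ξ := KKTaux.nonempty_Xi S
  rw [mem_interior_iff_mem_nhds, Metric.mem_nhds_iff] at hh
  obtain ⟨δ, hδ, hball⟩ := hh
  refine ⟨δ, hδ, fun ξ r hr => ?_⟩
  have hmem : h + ContinuousMap.const Ξ r ∈ S.coneC := by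
    apply hball
    rw [Metric.mem_ball, dist_eq_norm]
    have : h + ContinuousMap.const Ξ r - h = ContinuousMap.const Ξ r := by
      ext x; simp
    rw [this]
    exact (ContinuousMap.norm_lt_iff _ hδ).mpr fun x => by simpa using hr
  simpa using hmem ξ

end KKTAux3
section KKTAux4
set_option linter.unusedSectionVars false
set_option maxHeartbeats 800000

variable {X W R R₀ Ξ Ω : Type*}
    [NormedAddCommGroup X] [NormedSpace ℝ X]
    [NormedAddCommGroup W] [NormedSpace ℝ W]
    [NormedAddCommGroup R] [NormedSpace ℝ R]
    [NormedAddCommGroup R₀] [NormedSpace ℝ R₀]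
    [MeasurableSpace R] [BorelSpace R] [MeasurableSpace R₀] [BorelSpace R₀]
    [MetricSpace Ξ] [CompactSpace Ξ] [MeasurableSpace Ξ] [BorelSpace Ξ]
    [MeasurableSpace Ω]
    (S : StandingSetup X W R R₀ Ξ Ω) (A : Assumption3 S)

theorem KKTaux.image_B_segment (u₁ u₂ : StrongDual ℝ X) :
    S.B '' segment ℝ u₁ u₂ = segment ℝ (S.B u₁) (S.B u₂) := by
  have := image_segment ℝ S.B.toAffineMap u₁ u₂
  simpa using this

theorem KKTaux.G_taylor {ustar v : StrongDual ℝ X}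
    (hu : S.ψ ustar ≠ ⊤) (hv : S.ψ v ≠ ⊤) {c : ℝ} (hc : 0 < c) :
    ∃ t₀ : ℝ, 0 < t₀ ∧ t₀ ≤ 1 ∧ ∀ t : ℝ, 0 < t → t ≤ t₀ → ∀ ξ : Ξ,
      ‖S.G (S.B (ustar + t • (v - ustar))) ξ - S.G (S.B ustar) ξ
        - t • A.DG (S.B ustar) ξ (S.B (v - ustar))‖ ≤ c * t := by
  set d := v - ustar with hd
  set Bd := S.B d with hBd
  have hsegD : segment ℝ ustar v ⊆ {u : StrongDual ℝ X | S.ψ u ≠ ⊤} :=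
    (KKTaux.dom_convex S).segment_subset hu hv
  have hsegc : IsCompact (segment ℝ ustar v) := by
    rw [segment_eq_image']
    exact isCompact_Icc.image (by continuity)
  have hKc : IsCompact ((S.B '' segment ℝ ustar v) ×ˢ (Set.univ : Set Ξ)) :=
    (hsegc.image (KKTaux.B_cont S)).prod isCompact_univ
  have hsub : ((S.B '' segment ℝ ustar v) ×ˢ (Set.univ : Set Ξ)) ⊆
      (S.B '' A.U₀) ×ˢ Set.univ :=
    Set.prod_mono_left (Set.image_mono fun z hz => A.dom_sub (hsegD hz))
  have hcont : ContinuousOn (fun p : W × Ξ => A.DG p.1 p.2)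
      ((S.B '' segment ℝ ustar v) ×ˢ (Set.univ : Set Ξ)) := A.DG_jcont.mono hsub
  have hUC := hKc.uniformContinuousOn_of_continuous hcont
  rw [Metric.uniformContinuousOn_iff] at hUC
  set c' := c / (‖Bd‖ + 1) with hc'
  have hc'pos : 0 < c' := by positivity
  obtain ⟨r, hr, hUC⟩ := hUC c' hc'pos
  refine ⟨min 1 (r / (2 * (‖Bd‖ + 1))), by positivity, min_le_left _ _, ?_⟩
  intro t ht0 ht1 ξ
  have htle1 : t ≤ 1 := le_trans ht1 (min_le_left _ _)
  have hBdnn : (0:ℝ) ≤ ‖Bd‖ := norm_nonneg _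
  have htler : t * ‖Bd‖ < r := by
    have h2 : t ≤ r / (2 * (‖Bd‖ + 1)) := le_trans ht1 (min_le_right _ _)
    rw [le_div_iff₀ (by positivity)] at h2
    nlinarith
  set ut := ustar + t • d with hut
  have hutseg : ut ∈ segment ℝ ustar v := by
    rw [segment_eq_image']
    exact ⟨t, ⟨ht0.le, htle1⟩, rfl⟩
  have hseg2 : segment ℝ (S.B ustar) (S.B ut) ⊆ S.B '' segment ℝ ustar v := by
    rw [← KKTaux.image_B_segment S]
    exact Set.image_mono
      ((convex_segment ustar v).segment_subset (left_mem_segment ℝ ustar v) hutseg)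
  have hButd : S.B ut - S.B ustar = t • Bd := by
    rw [hut, map_add, LinearMap.map_smul]
    abel
  have hmemW₀ : ∀ x ∈ segment ℝ (S.B ustar) (S.B ut), x ∈ A.W₀ := by
    intro x hx
    obtain ⟨z, hz, rfl⟩ := hseg2 hx
    exact KKTaux.B_mem_W0 S A (hsegD hz)
  have hbound : ∀ x ∈ segment ℝ (S.B ustar) (S.B ut),
      ‖A.DG x ξ - A.DG (S.B ustar) ξ‖ ≤ c' := by
    intro x hx
    have hxmem : (x, ξ) ∈ (S.B '' segment ℝ ustar v) ×ˢ (Set.univ : Set Ξ) :=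
      ⟨hseg2 hx, trivial⟩
    have humem : (S.B ustar, ξ) ∈ (S.B '' segment ℝ ustar v) ×ˢ (Set.univ : Set Ξ) :=
      ⟨⟨ustar, left_mem_segment ℝ ustar v, rfl⟩, trivial⟩
    have hdist : dist (x, ξ) ((S.B ustar, ξ)) < r := by
      rw [Prod.dist_eq]
      simp only [dist_self]
      rw [max_eq_left dist_nonneg]
      -- dist x (S.B ustar) ≤ ‖S.B ut - S.B ustar‖
      obtain ⟨θ, ⟨hθ0, hθ1⟩, rfl⟩ := by rw [segment_eq_image'] at hx; exact hx
      rw [dist_eq_norm]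
      have : S.B ustar + θ • (S.B ut - S.B ustar) - S.B ustar = θ • (S.B ut - S.B ustar) := by
        abel
      rw [this, norm_smul, Real.norm_of_nonneg hθ0, hButd, norm_smul,
        Real.norm_of_nonneg ht0.le]
      calc θ * (t * ‖Bd‖) ≤ 1 * (t * ‖Bd‖) := by
            apply mul_le_mul_of_nonneg_right hθ1; positivity
      _ = t * ‖Bd‖ := one_mul _
      _ < r := htler
    have := hUC (x, ξ) hxmem (S.B ustar, ξ) humem hdist
    rw [dist_eq_norm] at this
    exact this.le
  have hMVT := Convex.norm_image_sub_le_of_norm_hasFDerivWithin_le'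
    (f := fun w => S.G w ξ) (f' := fun w => A.DG w ξ) (φ := A.DG (S.B ustar) ξ) (C := c')
    (s := segment ℝ (S.B ustar) (S.B ut))
    (fun x hx => (A.DG_deriv ξ x (hmemW₀ x hx)).hasFDerivWithinAt)
    hbound (convex_segment _ _) (left_mem_segment _ _ _) (right_mem_segment _ _ _)
  rw [hButd] at hMVT
  have hteq : A.DG (S.B ustar) ξ (t • Bd) = t • A.DG (S.B ustar) ξ Bd :=
    (A.DG (S.B ustar) ξ).map_smul t Bd
  rw [hteq] at hMVT
  have hfinal : c' * ‖t • Bd‖ ≤ c * t := by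
    rw [norm_smul, Real.norm_of_nonneg ht0.le]
    have h1 : c' * ‖Bd‖ ≤ c := by
      rw [hc', div_mul_eq_mul_div, div_le_iff₀ (by positivity)]
      nlinarith
    calc c' * (t * ‖Bd‖) = (c' * ‖Bd‖) * t := by ring
    _ ≤ c * t := mul_le_mul_of_nonneg_right h1 ht0.le
  exact le_trans hMVT hfinal

end KKTAux4
section KKTAux5
set_option linter.unusedSectionVars false
set_option maxHeartbeats 800000

variable {X W R R₀ Ξ Ω : Type*}
    [NormedAddCommGroup X] [NormedSpace ℝ X]
    [NormedAddCommGroup W] [NormedSpace ℝ W]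
    [NormedAddCommGroup R] [NormedSpace ℝ R]
    [NormedAddCommGroup R₀] [NormedSpace ℝ R₀]
    [MeasurableSpace R] [BorelSpace R] [MeasurableSpace R₀] [BorelSpace R₀]
    [MetricSpace Ξ] [CompactSpace Ξ] [MeasurableSpace Ξ] [BorelSpace Ξ]
    [MeasurableSpace Ω]
    (S : StandingSetup X W R R₀ Ξ Ω) (A : Assumption3 S)

theorem KKTaux.F_slope {ustar v : StrongDual ℝ X}
    (hu : S.ψ ustar ≠ ⊤) (hv : S.ψ v ≠ ⊤) {t : ℕ → ℝ}
    (ht0 : ∀ n, 0 < t n) (ht1 : ∀ n, t n ≤ 1) (htlim : Tendsto t atTop (𝓝 0)) :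
    Tendsto (fun n =>
        ∫ ξ, (S.J (S.B (ustar + t n • (v - ustar))) ξ - S.J (S.B ustar) ξ) / t n ∂S.μ)
      atTop (𝓝 (∫ ξ, A.DJ (S.B ustar) ξ (S.B (v - ustar)) ∂S.μ)) := by
  set d := v - ustar with hd
  have hdom : ∀ n, S.ψ (ustar + t n • d) ≠ ⊤ := by
    intro n
    have hmem : ustar + t n • d ∈ segment ℝ ustar v := by
      rw [segment_eq_image']
      exact ⟨t n, ⟨(ht0 n).le, ht1 n⟩, rfl⟩
    exact (KKTaux.dom_convex S).segment_subset hu hv hmem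
  have hBeq : ∀ n, S.B (ustar + t n • d) - S.B ustar = t n • S.B d := by
    intro n
    rw [map_add, LinearMap.map_smul]
    abel
  apply tendsto_integral_of_dominated_convergence (bound := fun ξ => A.L ξ * ‖S.B d‖)
  · intro n
    exact (((KKTaux.J_meas S _).sub (KKTaux.J_meas S _)).div_const _).aestronglyMeasurable
  · exact A.L_int.mul_const _
  · intro n
    refine Eventually.of_forall fun ξ => ?_
    have hlip := KKTaux.J_lip S A hu (hdom n) ξ
    rw [hBeq n, norm_smul, Real.norm_of_nonneg (ht0 n).le] at hlip
    have hstep : ‖(S.J (S.B (ustar + t n • d)) ξ - S.J (S.B ustar) ξ) / t n‖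
        = ‖S.J (S.B (ustar + t n • d)) ξ - S.J (S.B ustar) ξ‖ / t n := by
      rw [norm_div, Real.norm_of_nonneg (ht0 n).le]
    rw [hstep, div_le_iff₀ (ht0 n)]
    calc ‖S.J (S.B (ustar + t n • d)) ξ - S.J (S.B ustar) ξ‖
        ≤ A.L ξ * (t n * ‖S.B d‖) := hlip
    _ = A.L ξ * ‖S.B d‖ * t n := by ring
  · refine Eventually.of_forall fun ξ => ?_
    have hW₀ : S.B ustar ∈ A.W₀ := KKTaux.B_mem_W0 S A hu
    have hline : HasDerivAt (fun τ : ℝ => S.B ustar + τ • S.B d) (S.B d) 0 := by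
      simpa using ((hasDerivAt_id (0:ℝ)).smul_const (S.B d)).const_add (S.B ustar)
    have h0 : S.B ustar + (0:ℝ) • S.B d = S.B ustar := by simp
    have hl : HasFDerivAt (fun w => S.J w ξ) (A.DJ (S.B ustar) ξ)
        ((fun τ : ℝ => S.B ustar + τ • S.B d) 0) := by
      simpa [h0] using A.DJ_deriv ξ (S.B ustar) hW₀
    have hcomp : HasDerivAt (fun τ : ℝ => S.J (S.B ustar + τ • S.B d) ξ)
        (A.DJ (S.B ustar) ξ (S.B d)) 0 := by
      have := hl.comp_hasDerivAt 0 hline; exact this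
    rw [hasDerivAt_iff_tendsto_slope] at hcomp
    have htn : Tendsto t atTop (𝓝[≠] (0:ℝ)) := by
      rw [tendsto_nhdsWithin_iff]
      exact ⟨htlim, Eventually.of_forall fun n => by simp [(ht0 n).ne']⟩
    have := hcomp.comp htn
    have heq : ((slope (fun τ : ℝ => S.J (S.B ustar + τ • S.B d) ξ) 0) ∘ t)
        = fun n => (S.J (S.B (ustar + t n • d)) ξ - S.J (S.B ustar) ξ) / t n := by
      funext n
      rw [Function.comp_apply, slope_def_field]
      have hBarg : S.B (ustar + t n • d) = S.B ustar + t n • S.B d := by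
        rw [map_add, LinearMap.map_smul]
      rw [hBarg, h0]
      simp
    rwa [heq] at this

end KKTAux5
section KKTAux6
set_option linter.unusedSectionVars false
set_option maxHeartbeats 1600000

variable {X W R R₀ Ξ Ω : Type*}
    [NormedAddCommGroup X] [NormedSpace ℝ X]
    [NormedAddCommGroup W] [NormedSpace ℝ W]
    [NormedAddCommGroup R] [NormedSpace ℝ R]
    [NormedAddCommGroup R₀] [NormedSpace ℝ R₀]
    [MeasurableSpace R] [BorelSpace R] [MeasurableSpace R₀] [BorelSpace R₀]
    [MetricSpace Ξ] [CompactSpace Ξ] [MeasurableSpace Ξ] [BorelSpace Ξ]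
    [MeasurableSpace Ω]
    (S : StandingSetup X W R R₀ Ξ Ω) (A : Assumption3 S)

theorem KKTaux.strict_opt
    (Gc : StrongDual ℝ X → ContinuousMap Ξ R)
    (hGc : ∀ u ∈ A.U₀, ∀ ξ : Ξ, Gc u ξ = S.G (S.B u) ξ)
    (DGc : StrongDual ℝ X → StrongDual ℝ X → ContinuousMap Ξ R)
    (hDGc : ∀ u ∈ A.U₀, ∀ (h : StrongDual ℝ X) (ξ : Ξ),
      DGc u h ξ = A.DG (S.B u) ξ (S.B h))
    (ustar : StrongDual ℝ X)
    (hfeas : S.Feas ustar) (hdom : S.ψ ustar ≠ ⊤)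
    (hloc : ∃ ε : ℝ, 0 < ε ∧ ∀ u : StrongDual ℝ X, S.Feas u → ‖u - ustar‖ < ε →
      S.obj ustar ≤ S.obj u)
    {v : StrongDual ℝ X} (hv : S.ψ v ≠ ⊤) {s : ℝ} (hs : s ≤ 0)
    (hintpt : Gc ustar + DGc ustar (v - ustar) + s • Gc ustar ∈ interior S.coneC) :
    0 ≤ (∫ ξ, A.DJ (S.B ustar) ξ (S.B (v - ustar)) ∂S.μ)
      + (S.ψ v).toReal - (S.ψ ustar).toReal := by
  have hustarU₀ : ustar ∈ A.U₀ := A.dom_sub hdom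
  obtain ⟨ε, hε, hopt⟩ := hloc
  obtain ⟨δ, hδ, hmargin⟩ := KKTaux.interior_margin S hintpt
  set d := v - ustar with hd
  obtain ⟨t₀, ht₀pos, ht₀le1, hTaylor⟩ := KKTaux.G_taylor S A hdom hv (c := δ/2) (by positivity)
  set tstar := min t₀ (ε/(2*(‖d‖+1))) with htstar
  have htstarpos : 0 < tstar := lt_min ht₀pos (by positivity)
  set t : ℕ → ℝ := fun n => tstar/(n+1) with ht
  have ht0 : ∀ n, 0 < t n := fun n => by positivity
  have htle : ∀ n, t n ≤ tstar := by
    intro n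
    rw [ht]
    simp only
    rw [div_le_iff₀ (by positivity)]
    nlinarith [htstarpos]
  have ht1 : ∀ n, t n ≤ 1 := fun n =>
    le_trans (htle n) (le_trans (min_le_left _ _) ht₀le1)
  have htt₀ : ∀ n, t n ≤ t₀ := fun n => le_trans (htle n) (min_le_left _ _)
  have htlim : Tendsto t atTop (𝓝 0) := by
    rw [ht]
    have h1 : Tendsto (fun n : ℕ => 1/((n:ℝ)+1)) atTop (𝓝 0) :=
      tendsto_one_div_add_atTop_nhds_zero_nat
    have := h1.const_mul tstar
    simpa [div_eq_mul_inv, one_div, mul_comm] using this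
  have hdomn : ∀ n, S.ψ (ustar + t n • d) ≠ ⊤ := by
    intro n
    have hmem : ustar + t n • d ∈ segment ℝ ustar v := by
      rw [segment_eq_image']
      exact ⟨t n, ⟨(ht0 n).le, ht1 n⟩, rfl⟩
    exact (KKTaux.dom_convex S).segment_subset hdom hv hmem
  -- feasibility of the perturbed points
  have hfeasn : ∀ n, S.Feas (ustar + t n • d) := by
    intro n
    have htn := ht0 n
    refine hfeas.mono fun ξ hξK => ?_
    set gξ := S.G (S.B ustar) ξ with hgξ
    set Tdξ := A.DG (S.B ustar) ξ (S.B d) with hTdξ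
    set err := S.G (S.B (ustar + t n • d)) ξ - gξ - t n • Tdξ with herr
    have herrle : ‖err‖ ≤ δ/2 * t n := hTaylor (t n) htn (htt₀ n) ξ
    set r := (t n)⁻¹ • err with hr
    have hrnorm : ‖r‖ < δ := by
      rw [hr, norm_smul, Real.norm_of_nonneg (inv_nonneg.mpr htn.le)]
      calc (t n)⁻¹ * ‖err‖ ≤ (t n)⁻¹ * (δ/2 * t n) :=
            mul_le_mul_of_nonneg_left herrle (inv_nonneg.mpr htn.le)
      _ = δ/2 := by field_simp
      _ < δ := by linarith
    have hKmem : gξ + Tdξ + s • gξ + r ∈ S.K := by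
      have := hmargin ξ r hrnorm
      have hev : (Gc ustar + DGc ustar d + s • Gc ustar) ξ = gξ + Tdξ + s • gξ := by
        simp only [ContinuousMap.add_apply, ContinuousMap.smul_apply]
        rw [hGc ustar hustarU₀ ξ, hDGc ustar hustarU₀ d ξ]
      rwa [hev] at this
    have hb : (-s) • gξ ∈ S.K := S.K_cone (-s) gξ (by linarith) hξK
    have hab : gξ + Tdξ + s • gξ + r + (-s) • gξ ∈ S.K := KKTaux.K_add S hKmem hb
    have hcomb : (1 - t n) • gξ + t n • (gξ + Tdξ + s • gξ + r + (-s) • gξ) ∈ S.K :=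
      S.K_convex hξK hab (by linarith [ht1 n]) htn.le (by ring)
    have hfinal : (1 - t n) • gξ + t n • (gξ + Tdξ + s • gξ + r + (-s) • gξ)
        = S.G (S.B (ustar + t n • d)) ξ := by
      have hlin : (1 - t n) • gξ + t n • (gξ + Tdξ + s • gξ + r + (-s) • gξ)
          = gξ + t n • Tdξ + t n • r := by module
      rw [hlin, hr, smul_inv_smul₀ htn.ne', herr]
      abel
    rwa [hfinal] at hcomb
  -- the optimality chain
  have hq : ∀ n, 0 ≤ (∫ ξ, (S.J (S.B (ustar + t n • d)) ξ - S.J (S.B ustar) ξ) / t n ∂S.μ)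
      + ((S.ψ v).toReal - (S.ψ ustar).toReal) := by
    intro n
    have htn := ht0 n
    have hnear : ‖(ustar + t n • d) - ustar‖ < ε := by
      have h1 : ustar + t n • d - ustar = t n • d := by abel
      rw [h1, norm_smul, Real.norm_of_nonneg htn.le]
      have h2 : t n ≤ ε/(2*(‖d‖+1)) := le_trans (htle n) (min_le_right _ _)
      have hdn : (0:ℝ) ≤ ‖d‖ := norm_nonneg _
      rw [le_div_iff₀ (by positivity)] at h2
      nlinarith
    have hobj := hopt _ (hfeasn n) hnear
    -- translate to reals
    have hFu : S.F ustar ≠ ⊤ := KKTaux.F_ne_top S A hdom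
    have hFt : S.F (ustar + t n • d) ≠ ⊤ := KKTaux.F_ne_top S A (hdomn n)
    have hobj_t_ne : S.obj (ustar + t n • d) ≠ ⊤ := by
      rw [StandingSetup.obj]
      exact ENNReal.add_ne_top.mpr ⟨hFt, hdomn n⟩
    have hreal : (S.F ustar).toReal + (S.ψ ustar).toReal
        ≤ (S.F (ustar + t n • d)).toReal + (S.ψ (ustar + t n • d)).toReal := by
      have := ENNReal.toReal_mono hobj_t_ne hobj
      rwa [StandingSetup.obj, StandingSetup.obj, ENNReal.toReal_add hFu hdom,
        ENNReal.toReal_add hFt (hdomn n)] at this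
    -- convexity of ψ
    have hψconv : (S.ψ (ustar + t n • d)).toReal
        ≤ t n * (S.ψ v).toReal + (1 - t n) * (S.ψ ustar).toReal := by
      have harg : t n • v + (1 - t n) • ustar = ustar + t n • d := by
        rw [hd]; module
      have h1 := S.ψ_convex v ustar (t n) htn.le (ht1 n)
      rw [harg] at h1
      have h2 := ENNReal.toReal_mono (ENNReal.add_ne_top.mpr
        ⟨ENNReal.mul_ne_top ENNReal.ofReal_ne_top hv,
         ENNReal.mul_ne_top ENNReal.ofReal_ne_top hdom⟩) h1
      rwa [ENNReal.toReal_add (ENNReal.mul_ne_top ENNReal.ofReal_ne_top hv)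
          (ENNReal.mul_ne_top ENNReal.ofReal_ne_top hdom),
        ENNReal.toReal_mul, ENNReal.toReal_mul,
        ENNReal.toReal_ofReal htn.le, ENNReal.toReal_ofReal (by linarith [ht1 n])] at h2
    -- F difference
    have hFdiff : (S.F (ustar + t n • d)).toReal - (S.F ustar).toReal
        = t n * (∫ ξ, (S.J (S.B (ustar + t n • d)) ξ - S.J (S.B ustar) ξ) / t n ∂S.μ) := by
      rw [KKTaux.F_toReal S A (hdomn n), KKTaux.F_toReal S A hdom]
      rw [integral_div]
      rw [← integral_sub (KKTaux.J_integrable S A (hdomn n)) (KKTaux.J_integrable S A hdom)]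
      field_simp
    set q := ∫ ξ, (S.J (S.B (ustar + t n • d)) ξ - S.J (S.B ustar) ξ) / t n ∂S.μ with hqdef
    have hchain : 0 ≤ t n * q + t n * ((S.ψ v).toReal - (S.ψ ustar).toReal) := by
      nlinarith [hreal, hψconv, hFdiff]
    nlinarith [hchain, htn]
  have hlimit := (KKTaux.F_slope S A hdom hv ht0 ht1 htlim).add_const
    ((S.ψ v).toReal - (S.ψ ustar).toReal)
  have := ge_of_tendsto hlimit (Eventually.of_forall hq)
  linarith [this]

end KKTAux6
section KKTAux7
set_option linter.unusedSectionVars false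
set_option maxHeartbeats 1600000

variable {X W R R₀ Ξ Ω : Type*}
    [NormedAddCommGroup X] [NormedSpace ℝ X]
    [NormedAddCommGroup W] [NormedSpace ℝ W]
    [NormedAddCommGroup R] [NormedSpace ℝ R]
    [NormedAddCommGroup R₀] [NormedSpace ℝ R₀]
    [MeasurableSpace R] [BorelSpace R] [MeasurableSpace R₀] [BorelSpace R₀]
    [MetricSpace Ξ] [CompactSpace Ξ] [MeasurableSpace Ξ] [BorelSpace Ξ]
    [MeasurableSpace Ω]
    (S : StandingSetup X W R R₀ Ξ Ω) (A : Assumption3 S)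

theorem KKTaux.psi_toReal_convex {u v : StrongDual ℝ X}
    (hu : S.ψ u ≠ ⊤) (hv : S.ψ v ≠ ⊤) {a b : ℝ}
    (ha : 0 ≤ a) (hb : 0 ≤ b) (hab : a + b = 1) :
    (S.ψ (a • u + b • v)).toReal ≤ a * (S.ψ u).toReal + b * (S.ψ v).toReal := by
  have hb' : b = 1 - a := by linarith
  subst hb'
  have h1 := S.ψ_convex u v a ha (by linarith)
  have h2 := ENNReal.toReal_mono (ENNReal.add_ne_top.mpr
    ⟨ENNReal.mul_ne_top ENNReal.ofReal_ne_top hu,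
     ENNReal.mul_ne_top ENNReal.ofReal_ne_top hv⟩) h1
  rwa [ENNReal.toReal_add (ENNReal.mul_ne_top ENNReal.ofReal_ne_top hu)
      (ENNReal.mul_ne_top ENNReal.ofReal_ne_top hv),
    ENNReal.toReal_mul, ENNReal.toReal_mul,
    ENNReal.toReal_ofReal ha, ENNReal.toReal_ofReal (by linarith)] at h2

end KKTAux7
set_option maxHeartbeats 3200000 in
/-- KKT conditions for problem (P): if `𝒦` has nonempty interior and the
constraint qualification holds at a local optimum `u*` of (P), then there is a Lagrange
multiplier `λ* ∈ C(Ξ;R)*` with `0 ∈ DF(u*) + ∂ψ(u*) + D𝒢(u*)*λ*`, `λ* ∈ 𝒦⁻`, and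
`⟨λ*, 𝒢(u*)⟩ = 0`. -/
theorem KKT_conditions_for_problem_P {X W R R₀ Ξ Ω : Type*}
    [NormedAddCommGroup X] [NormedSpace ℝ X] [SeparableSpace X] [CompleteSpace X]
    [NormedAddCommGroup W] [NormedSpace ℝ W] [SeparableSpace W] [CompleteSpace W]
    [NormedAddCommGroup R] [NormedSpace ℝ R] [SeparableSpace R] [CompleteSpace R]
    [NormedAddCommGroup R₀] [NormedSpace ℝ R₀] [SeparableSpace R₀] [CompleteSpace R₀]
    [MeasurableSpace R] [BorelSpace R] [MeasurableSpace R₀] [BorelSpace R₀]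
    [MetricSpace Ξ] [CompactSpace Ξ] [SeparableSpace Ξ]
    [MeasurableSpace Ξ] [BorelSpace Ξ] [MeasurableSpace Ω]
    (S : StandingSetup X W R R₀ Ξ Ω) (A : Assumption3 S)
    (Gc : StrongDual ℝ X → ContinuousMap Ξ R)
    (hGc : ∀ u ∈ A.U₀, ∀ ξ : Ξ, Gc u ξ = S.G (S.B u) ξ)
    (DGc : StrongDual ℝ X → StrongDual ℝ X → ContinuousMap Ξ R)
    (hDGc : ∀ u ∈ A.U₀, ∀ (h : StrongDual ℝ X) (ξ : Ξ),
      DGc u h ξ = A.DG (S.B u) ξ (S.B h))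
    (hint : (interior S.coneC).Nonempty)
    (ustar : StrongDual ℝ X)
    (hfeas : S.Feas ustar) (hdom : S.ψ ustar ≠ ⊤)
    (hloc : ∃ ε : ℝ, 0 < ε ∧ ∀ u : StrongDual ℝ X, S.Feas u → ‖u - ustar‖ < ε →
      S.obj ustar ≤ S.obj u)
    (hCQ : S.CQ Gc DGc ustar) :
    ∃ lam : StrongDual ℝ (ContinuousMap Ξ R), S.KKTP A Gc DGc ustar lam := by
  classical
  have hXi : Nonempty Ξ := KKTaux.nonempty_Xi S
  have hustarU₀ : ustar ∈ A.U₀ := A.dom_sub hdom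
  set D : Set (StrongDual ℝ X) := {u | S.ψ u ≠ ⊤} with hD
  set g : ContinuousMap Ξ R := Gc ustar with hg
  set DF : StrongDual ℝ X → ℝ :=
    fun h => ∫ ξ, A.DJ (S.B ustar) ξ (S.B h) ∂S.μ with hDF
  set val : StrongDual ℝ X → ℝ :=
    fun v => DF (v - ustar) + (S.ψ v).toReal - (S.ψ ustar).toReal with hval
  -- integrability / linearity of DF
  have hDint : ∀ h : StrongDual ℝ X,
      Integrable (fun ξ => A.DJ (S.B ustar) ξ (S.B h)) S.μ :=
    fun h => KKTaux.DJ_integrable S A hdom (S.B h)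
  have hDFadd : ∀ h₁ h₂, DF (h₁ + h₂) = DF h₁ + DF h₂ := by
    intro h₁ h₂
    rw [hDF]
    simp only
    rw [← integral_add (hDint h₁) (hDint h₂)]
    congr 1
    funext ξ
    rw [map_add, map_add]
  have hDFsmul : ∀ (c : ℝ) h, DF (c • h) = c * DF h := by
    intro c h
    rw [hDF]
    simp only
    have heq : (fun ξ => A.DJ (S.B ustar) ξ (S.B (c • h)))
        = fun ξ => c • (A.DJ (S.B ustar) ξ (S.B h)) := by
      funext ξ
      rw [LinearMap.map_smul, ContinuousLinearMap.map_smul]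
    rw [heq, integral_smul, smul_eq_mul]
  have hDFzero : DF 0 = 0 := by
    have := hDFsmul 0 0
    simpa using this
  -- linearity of DGc ustar
  have hDGcadd : ∀ h₁ h₂ : StrongDual ℝ X,
      DGc ustar (h₁ + h₂) = DGc ustar h₁ + DGc ustar h₂ := by
    intro h₁ h₂
    ext ξ
    simp only [ContinuousMap.add_apply]
    rw [hDGc ustar hustarU₀ _ ξ, hDGc ustar hustarU₀ _ ξ, hDGc ustar hustarU₀ _ ξ,
      map_add, map_add]
  have hDGcsmul : ∀ (c : ℝ) (h : StrongDual ℝ X),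
      DGc ustar (c • h) = c • DGc ustar h := by
    intro c h
    ext ξ
    simp only [ContinuousMap.smul_apply]
    rw [hDGc ustar hustarU₀ _ ξ, hDGc ustar hustarU₀ _ ξ, LinearMap.map_smul,
      ContinuousLinearMap.map_smul]
  have hDGczero : DGc ustar 0 = 0 := by
    have := hDGcsmul 0 0
    simpa using this
  have hDGccomb : ∀ (a b : ℝ) (v₁ v₂ : StrongDual ℝ X), a + b = 1 →
      DGc ustar (a • v₁ + b • v₂ - ustar)
        = a • DGc ustar (v₁ - ustar) + b • DGc ustar (v₂ - ustar) := by
    intro a b v₁ v₂ hab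
    have harg : a • v₁ + b • v₂ - ustar = a • (v₁ - ustar) + b • (v₂ - ustar) := by
      have hb' : b = 1 - a := by linarith
      subst hb'
      module
    rw [harg, hDGcadd, hDGcsmul, hDGcsmul]
  -- the open convex set and the ray
  set O : Set (ℝ × ContinuousMap Ξ R) := {p | ∃ v ∈ D, ∃ s : ℝ, s ≤ 0 ∧ val v < p.1 ∧
    g + DGc ustar (v - ustar) + s • g - p.2 ∈ interior S.coneC} with hO
  set Tray : Set (ℝ × ContinuousMap Ξ R) := {p | p.1 ≤ 0 ∧ p.2 = 0} with hTray
  have hOopen : IsOpen O := by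
    rw [isOpen_iff_forall_mem_open]
    rintro ⟨a, k⟩ ⟨v, hvD, s, hs, hvala, hintm⟩
    refine ⟨(Set.Ioi (val v)) ×ˢ ((fun k' => g + DGc ustar (v - ustar) + s • g - k') ⁻¹'
      (interior S.coneC)), ?_, ?_, ?_⟩
    · rintro ⟨a', k'⟩ ⟨ha', hk'⟩
      exact ⟨v, hvD, s, hs, ha', hk'⟩
    · exact (isOpen_Ioi).prod ((isOpen_interior).preimage (continuous_const.sub continuous_id))
    · exact ⟨hvala, hintm⟩
  have hOconv : Convex ℝ O := by
    rintro ⟨a₁, k₁⟩ ⟨v₁, hv₁, s₁, hs₁, hval₁, hint₁⟩ ⟨a₂, k₂⟩ ⟨v₂, hv₂, s₂, hs₂, hval₂, hint₂⟩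
      a b ha hb hab
    rcases eq_or_lt_of_le ha with rfl | ha'
    · have hb1 : b = 1 := by linarith
      subst hb1
      simpa using ⟨v₂, hv₂, s₂, hs₂, hval₂, hint₂⟩
    rcases eq_or_lt_of_le hb with rfl | hb'
    · have ha1 : a = 1 := by linarith
      subst ha1
      simpa using ⟨v₁, hv₁, s₁, hs₁, hval₁, hint₁⟩
    refine ⟨a • v₁ + b • v₂, KKTaux.dom_convex S hv₁ hv₂ ha hb hab,
      a * s₁ + b * s₂, by nlinarith, ?_, ?_⟩
    · -- value strict inequality
      have hψ : (S.ψ (a • v₁ + b • v₂)).toReal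
          ≤ a * (S.ψ v₁).toReal + b * (S.ψ v₂).toReal :=
        KKTaux.psi_toReal_convex S hv₁ hv₂ ha hb hab
      have hDFc : DF (a • v₁ + b • v₂ - ustar)
          = a * DF (v₁ - ustar) + b * DF (v₂ - ustar) := by
        have harg : a • v₁ + b • v₂ - ustar = a • (v₁ - ustar) + b • (v₂ - ustar) := by
          have hb2 : b = 1 - a := by linarith
          subst hb2
          module
        rw [harg, hDFadd, hDFsmul, hDFsmul]
      have h1 : val (a • v₁ + b • v₂) ≤ a * val v₁ + b * val v₂ := by
        rw [hval]
        simp only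
        rw [hDFc]
        have hψu : a * (S.ψ ustar).toReal + b * (S.ψ ustar).toReal = (S.ψ ustar).toReal := by
          rw [← add_mul, hab, one_mul]
        nlinarith
      have h2 : a * val v₁ + b * val v₂ < a * a₁ + b * a₂ :=
        add_lt_add (mul_lt_mul_of_pos_left hval₁ ha') (mul_lt_mul_of_pos_left hval₂ hb')
      exact lt_of_le_of_lt h1 h2
    · -- cone membership
      have hcomb := hDGccomb a b v₁ v₂ hab
      have hiden : g + DGc ustar (a • v₁ + b • v₂ - ustar) + (a * s₁ + b * s₂) • g
            - (a • (⟨a₁, k₁⟩ : ℝ × ContinuousMap Ξ R) + b • ⟨a₂, k₂⟩).2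
          = a • (g + DGc ustar (v₁ - ustar) + s₁ • g - k₁)
            + b • (g + DGc ustar (v₂ - ustar) + s₂ • g - k₂) := by
        rw [hcomb]
        have hb2 : b = 1 - a := by linarith
        subst hb2
        simp only [Prod.smul_snd, Prod.snd_add]
        module
      rw [hiden]
      exact (KKTaux.coneC_convex S).interior hint₁ hint₂ ha'.le hb'.le hab
  have hTconv : Convex ℝ Tray := by
    rintro ⟨a₁, k₁⟩ ⟨ha₁, hk₁⟩ ⟨a₂, k₂⟩ ⟨ha₂, hk₂⟩ a b ha hb hab
    simp only [hTray, Set.mem_setOf_eq] at *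
    constructor
    · simp only [Prod.fst_add, Prod.smul_fst, smul_eq_mul]
      nlinarith [hk₁, hk₂]
    · simp only [Prod.snd_add, Prod.smul_snd]
      rw [hk₁, hk₂]
      simp
  have hdisj : Disjoint O Tray := by
    rw [Set.disjoint_left]
    rintro ⟨a, k⟩ ⟨v, hvD, s, hs, hvala, hintm⟩ ⟨ha, hk⟩
    simp only at hk ha
    rw [hk, sub_zero] at hintm
    have h0 := KKTaux.strict_opt S A Gc hGc DGc hDGc ustar hfeas hdom hloc hvD hs hintm
    have : val v < 0 := lt_of_lt_of_le hvala ha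
    rw [hval] at this
    simp only at this
    linarith
  obtain ⟨f, uu, hfO, hfT⟩ := geometric_hahn_banach_open hOconv hOopen hTconv hdisj
  set θ : ℝ := f (1, 0) with hθ
  set lam0 : StrongDual ℝ (ContinuousMap Ξ R) :=
    f.comp (ContinuousLinearMap.inr ℝ ℝ (ContinuousMap Ξ R)) with hlam0
  have hsplit : ∀ (a : ℝ) (k : ContinuousMap Ξ R), f (a, k) = a * θ + lam0 k := by
    intro a k
    have h1 : ((a, k) : ℝ × ContinuousMap Ξ R)
        = a • ((1 : ℝ), (0 : ContinuousMap Ξ R)) + ((0 : ℝ), k) := by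
      simp [Prod.ext_iff]
    rw [h1, map_add, _root_.map_smul]
    rw [hlam0]
    simp [smul_eq_mul]
    exact Or.inl rfl
  have huu0 : uu ≤ 0 := by
    have h00 : ((0, 0) : ℝ × ContinuousMap Ξ R) ∈ Tray := ⟨le_refl 0, rfl⟩
    have := hfT _ h00
    rw [Prod.mk_zero_zero, map_zero] at this
    exact this
  -- the master inequality
  have hkey : ∀ v ∈ D, ∀ s : ℝ, s ≤ 0 → ∀ ε : ℝ, 0 < ε →
      ∀ k'' ∈ interior S.coneC,
      (val v + ε) * θ + lam0 g + lam0 (DGc ustar (v - ustar)) + s * lam0 g - lam0 k'' < 0 := by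
    intro v hv s hs ε hε k'' hk''
    have hmem : ((val v + ε, g + DGc ustar (v - ustar) + s • g - k'')) ∈ O := by
      refine ⟨v, hv, s, hs, show val v < val v + ε by linarith, ?_⟩
      show g + DGc ustar (v - ustar) + s • g - (g + DGc ustar (v - ustar) + s • g - k'')
        ∈ interior S.coneC
      have : g + DGc ustar (v - ustar) + s • g - (g + DGc ustar (v - ustar) + s • g - k'')
          = k'' := by abel
      rw [this]
      exact hk''
    have h1 := hfO _ hmem
    rw [hsplit] at h1
    rw [map_sub, map_add, map_add, _root_.map_smul] at h1
    have h2 : (val v + ε) * θ + (lam0 g + lam0 (DGc ustar (v - ustar)) + s * lam0 g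
        - lam0 k'') < uu := by
      simpa [smul_eq_mul] using h1
    linarith
  -- CQ data
  obtain ⟨uhat, huhatdom, hkhat⟩ := hCQ
  have huhatD : uhat ∈ D := huhatdom
  set khat : ContinuousMap Ξ R := Gc ustar + DGc ustar (uhat - ustar) with hkhatdef
  have hkhatint : khat ∈ interior S.coneC := hkhat
  have hlamkhat : lam0 khat = lam0 g + lam0 (DGc ustar (uhat - ustar)) := by
    rw [hkhatdef, map_add, hg]
  -- θ < 0
  have hθuhat : ∀ ε : ℝ, 0 < ε → (val uhat + ε) * θ < 0 := by
    intro ε hε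
    have := hkey uhat huhatD 0 le_rfl ε hε khat hkhatint
    rw [hlamkhat] at this
    linarith
  have hθneg : θ < 0 := by
    rcases lt_trichotomy θ 0 with h | h | h
    · exact h
    · exfalso
      have := hθuhat 1 one_pos
      rw [h] at this
      simp at this
    · exfalso
      have h1 := hθuhat (|val uhat| + 1) (by positivity)
      have hpos : 0 < val uhat + (|val uhat| + 1) := by
        have := neg_abs_le (val uhat)
        linarith
      nlinarith [mul_pos hpos h]
  -- lam0 nonnegative on the cone
  have hlam0cone : ∀ k ∈ S.coneC, 0 ≤ lam0 k := by
    intro k hk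
    by_contra hneg
    push_neg at hneg
    have hstep : ∀ n : ℕ, (val uhat + 1) * θ - (n : ℝ) * lam0 k < 0 := by
      intro n
      have hmem : khat + (n : ℝ) • k ∈ interior S.coneC :=
        KKTaux.interior_add_cone S hkhatint (KKTaux.coneC_smul S (by positivity) hk)
      have := hkey uhat huhatD 0 le_rfl 1 one_pos _ hmem
      rw [map_add, hlamkhat, _root_.map_smul] at this
      simp only [smul_eq_mul] at this
      linarith
    obtain ⟨n, hn⟩ := exists_nat_gt (((val uhat + 1) * θ) / lam0 k)
    have h1 := hstep n
    rw [div_lt_iff_of_neg hneg] at hn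
    linarith
  -- stationarity-type inequality
  have hstat : ∀ v ∈ D, val v * θ + lam0 g + lam0 (DGc ustar (v - ustar)) ≤ 0 := by
    intro v hv
    have hseq : ∀ n : ℕ, val v * θ + lam0 g + lam0 (DGc ustar (v - ustar))
        + (1/((n:ℝ)+1)) * (θ - lam0 khat) < 0 := by
      intro n
      have hpos : (0:ℝ) < 1/((n:ℝ)+1) := by positivity
      have hmem : (1/((n:ℝ)+1)) • khat ∈ interior S.coneC :=
        KKTaux.interior_smul_cone S hpos hkhatint
      have := hkey v hv 0 le_rfl (1/((n:ℝ)+1)) hpos _ hmem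
      rw [_root_.map_smul] at this
      simp only [smul_eq_mul] at this
      nlinarith
    have htend : Tendsto (fun n : ℕ => val v * θ + lam0 g + lam0 (DGc ustar (v - ustar))
        + (1/((n:ℝ)+1)) * (θ - lam0 khat)) atTop
        (𝓝 (val v * θ + lam0 g + lam0 (DGc ustar (v - ustar)))) := by
      have h1 : Tendsto (fun n : ℕ => 1/((n:ℝ)+1)) atTop (𝓝 0) :=
        tendsto_one_div_add_atTop_nhds_zero_nat
      have h2 := (h1.mul_const (θ - lam0 khat)).const_add
        (val v * θ + lam0 g + lam0 (DGc ustar (v - ustar)))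
      simpa using h2
    exact le_of_tendsto htend (Eventually.of_forall fun n => (hseq n).le)
  -- lam0 g ≥ 0
  have hlam0g_nonneg : 0 ≤ lam0 g := by
    by_contra hneg
    push_neg at hneg
    have hstep : ∀ n : ℕ, (val uhat + 1) * θ - (n : ℝ) * lam0 g < 0 := by
      intro n
      have := hkey uhat huhatD (-(n:ℝ)) (neg_nonpos.mpr (Nat.cast_nonneg n)) 1 one_pos
        khat hkhatint
      rw [hlamkhat] at this
      linarith
    obtain ⟨n, hn⟩ := exists_nat_gt (((val uhat + 1) * θ) / lam0 g)
    have h1 := hstep n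
    rw [div_lt_iff_of_neg hneg] at hn
    linarith
  -- lam0 g ≤ 0, via stationarity at v = ustar
  have hvalustar : val ustar = 0 := by
    rw [hval]
    simp [hDFzero]
  have hlam0g_nonpos : lam0 g ≤ 0 := by
    have := hstat ustar hdom
    rw [hvalustar, sub_self, hDGczero, map_zero] at this
    linarith
  have hlam0g : lam0 g = 0 := le_antisymm hlam0g_nonpos hlam0g_nonneg
  -- the multiplier
  set lam : StrongDual ℝ (ContinuousMap Ξ R) := θ⁻¹ • lam0 with hlam
  have hlamapp : ∀ k, lam k = θ⁻¹ * lam0 k := by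
    intro k
    rw [hlam]
    simp [smul_eq_mul]
  have hlamcone : ∀ k : ContinuousMap Ξ R, (∀ ξ, k ξ ∈ S.K) → lam k ≤ 0 := by
    intro k hk
    rw [hlamapp]
    have h1 : 0 ≤ lam0 k := hlam0cone k hk
    have h2 : θ⁻¹ ≤ 0 := inv_nonpos.mpr hθneg.le
    exact mul_nonpos_of_nonpos_of_nonneg h2 h1
  have hlamg : lam (Gc ustar) = 0 := by
    rw [hlamapp, ← hg, hlam0g, mul_zero]
  -- key stationarity in final form
  have hstat' : ∀ v, S.ψ v ≠ ⊤ →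
      0 ≤ val v + lam (DGc ustar (v - ustar)) := by
    intro v hv
    have h1 := hstat v hv
    rw [hlam0g] at h1
    have h2 : θ⁻¹ * (val v * θ + lam0 (DGc ustar (v - ustar))) ≥ 0 := by
      have hinv : θ⁻¹ ≤ 0 := inv_nonpos.mpr hθneg.le
      have ha : val v * θ + lam0 (DGc ustar (v - ustar)) ≤ 0 := by linarith
      nlinarith [mul_nonneg (neg_nonneg.mpr hinv) (neg_nonneg.mpr ha)]
    have hθne : θ ≠ 0 := ne_of_lt hθneg
    have h3 : θ⁻¹ * (val v * θ) = val v := by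
      rw [mul_comm (val v) θ, ← mul_assoc, inv_mul_cancel₀ hθne, one_mul]
    rw [hlamapp]
    nlinarith [h2, h3]
  -- continuity machinery for η
  set Bc : StrongDual ℝ X →L[ℝ] W := ⟨S.B, KKTaux.B_cont S⟩ with hBc
  have hDGcont : Continuous fun ξ : Ξ => A.DG (S.B ustar) ξ := by
    have hmap : Continuous fun ξ : Ξ => ((S.B ustar, ξ) : W × Ξ) :=
      continuous_const.prodMk continuous_id
    have h1 : ContinuousOn (fun ξ : Ξ => A.DG (S.B ustar) ξ) Set.univ := by
      exact A.DG_jcont.comp (s := (Set.univ : Set Ξ)) hmap.continuousOn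
        (fun ξ _ => ⟨⟨ustar, hustarU₀, rfl⟩, trivial⟩)
    rwa [continuousOn_univ] at h1
  obtain ⟨ξ₀, -, hξ₀⟩ := isCompact_univ.exists_isMaxOn Set.univ_nonempty
    (hDGcont.norm).continuousOn
  set M : ℝ := ‖A.DG (S.B ustar) ξ₀‖ with hM
  have hMnn : 0 ≤ M := norm_nonneg _
  have hDGcnorm : ∀ h : StrongDual ℝ X, ‖DGc ustar h‖ ≤ M * ‖Bc‖ * ‖h‖ := by
    intro h
    rw [ContinuousMap.norm_le _ (by positivity)]
    intro ξ
    rw [hDGc ustar hustarU₀ h ξ]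
    calc ‖A.DG (S.B ustar) ξ (S.B h)‖ ≤ ‖A.DG (S.B ustar) ξ‖ * ‖S.B h‖ :=
          (A.DG (S.B ustar) ξ).le_opNorm _
    _ ≤ M * ‖S.B h‖ := by
        exact mul_le_mul_of_nonneg_right (hξ₀ (Set.mem_univ ξ)) (norm_nonneg _)
    _ ≤ M * (‖Bc‖ * ‖h‖) := by
        apply mul_le_mul_of_nonneg_left (Bc.le_opNorm h) hMnn
    _ = M * ‖Bc‖ * ‖h‖ := by ring
  have hDFnorm : ∀ h : StrongDual ℝ X,
      |DF h| ≤ (∫ ξ, A.L ξ ∂S.μ) * ‖Bc‖ * ‖h‖ := by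
    intro h
    rw [hDF]
    simp only
    calc |∫ ξ, A.DJ (S.B ustar) ξ (S.B h) ∂S.μ|
        ≤ ∫ ξ, |A.DJ (S.B ustar) ξ (S.B h)| ∂S.μ := by
          simpa using norm_integral_le_integral_norm fun ξ => A.DJ (S.B ustar) ξ (S.B h)
    _ ≤ ∫ ξ, A.L ξ * ‖S.B h‖ ∂S.μ := by
        apply integral_mono (hDint h).abs (A.L_int.mul_const _)
        intro ξ
        calc |A.DJ (S.B ustar) ξ (S.B h)| ≤ ‖A.DJ (S.B ustar) ξ‖ * ‖S.B h‖ :=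
              (A.DJ (S.B ustar) ξ).le_opNorm _
        _ ≤ A.L ξ * ‖S.B h‖ :=
              mul_le_mul_of_nonneg_right
                (A.DJ_bound _ (KKTaux.B_mem_W0 S A hdom) ξ) (norm_nonneg _)
    _ = (∫ ξ, A.L ξ ∂S.μ) * ‖S.B h‖ := by rw [integral_mul_const]
    _ ≤ (∫ ξ, A.L ξ ∂S.μ) * (‖Bc‖ * ‖h‖) := by
        apply mul_le_mul_of_nonneg_left (Bc.le_opNorm h)
        exact integral_nonneg fun ξ => le_trans (norm_nonneg _)
          (A.DJ_bound _ (KKTaux.B_mem_W0 S A hdom) ξ)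
    _ = (∫ ξ, A.L ξ ∂S.μ) * ‖Bc‖ * ‖h‖ := by ring
  -- the subgradient η
  set ηlin : StrongDual ℝ X →ₗ[ℝ] ℝ :=
    { toFun := fun h => -(DF h) - lam (DGc ustar h)
      map_add' := by
        intro h₁ h₂
        show -(DF (h₁ + h₂)) - lam (DGc ustar (h₁ + h₂))
          = (-(DF h₁) - lam (DGc ustar h₁)) + (-(DF h₂) - lam (DGc ustar h₂))
        rw [hDFadd, hDGcadd, map_add]
        ring
      map_smul' := by
        intro c h
        show -(DF (c • h)) - lam (DGc ustar (c • h))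
          = (RingHom.id ℝ) c • (-(DF h) - lam (DGc ustar h))
        rw [hDFsmul, hDGcsmul, _root_.map_smul]
        simp only [RingHom.id_apply, smul_eq_mul]
        ring } with hηlin
  have hηbound : ∀ h : StrongDual ℝ X,
      ‖ηlin h‖ ≤ ((∫ ξ, A.L ξ ∂S.μ) * ‖Bc‖ + ‖lam‖ * (M * ‖Bc‖)) * ‖h‖ := by
    intro h
    have h1 : ‖ηlin h‖ ≤ |DF h| + |lam (DGc ustar h)| := by
      rw [hηlin]
      simp only [LinearMap.coe_mk, AddHom.coe_mk, Real.norm_eq_abs]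
      calc |-(DF h) - lam (DGc ustar h)| ≤ |-(DF h)| + |lam (DGc ustar h)| :=
            abs_sub _ _
      _ = |DF h| + |lam (DGc ustar h)| := by rw [abs_neg]
    have h2 : |lam (DGc ustar h)| ≤ ‖lam‖ * (M * ‖Bc‖ * ‖h‖) := by
      calc |lam (DGc ustar h)| ≤ ‖lam‖ * ‖DGc ustar h‖ := lam.le_opNorm _
      _ ≤ ‖lam‖ * (M * ‖Bc‖ * ‖h‖) :=
            mul_le_mul_of_nonneg_left (hDGcnorm h) (norm_nonneg _)
    have h3 := hDFnorm h
    calc ‖ηlin h‖ ≤ |DF h| + |lam (DGc ustar h)| := h1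
    _ ≤ (∫ ξ, A.L ξ ∂S.μ) * ‖Bc‖ * ‖h‖ + ‖lam‖ * (M * ‖Bc‖ * ‖h‖) := add_le_add h3 h2
    _ = ((∫ ξ, A.L ξ ∂S.μ) * ‖Bc‖ + ‖lam‖ * (M * ‖Bc‖)) * ‖h‖ := by ring
  set η : StrongDual ℝ (StrongDual ℝ X) :=
    LinearMap.mkContinuous ηlin _ hηbound with hη
  have hηapp : ∀ h, η h = -(DF h) - lam (DGc ustar h) := by
    intro h
    rw [hη]
    rfl
  refine ⟨lam, ⟨η, ⟨hdom, ?_⟩, ?_⟩, hlamcone, hlamg⟩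
  · -- η is a subgradient of ψ at ustar
    intro v hv
    have h1 := hstat' v hv
    rw [hval] at h1
    simp only at h1
    rw [hηapp]
    linarith
  · -- the stationarity identity
    intro h
    rw [hηapp]
    rw [hDF]
    simp only
    ring
end
end

section
/- Under the standing setup (Assumption 1), Assumption 3, and with β : R → [0,∞) convex, continuously differentiable, and β(r) = 0 iff r ∈ K (Assumption 2'), suppose 𝒦 has nonempty interior. Let (γ_N) ⊂ (0,∞) with γ_N → ∞, and let (u_N^{γ_N}, λ_N^{γ_N}) satisfy the regularized SAA stationarity condition 0 ∈ DF̂_N(u_N^{γ_N}) + ∂ψ(u_N^{γ_N}) + D𝒢(u_N^{γ_N})*λ_N^{γ_N}, where λ_N^{γ_N} ∈ C(Ξ;R)* is defined by ⟨λ_N^{γ_N}, v⟩ := (1/N)Σ_{i=1}^N ⟨γ_N Dβ(G(u_N^{γ_N},ξ^i)), v(ξ^i)⟩. If with probability one u_N^{γ_N} ⇀* ū, where ū satisfies the constraint qualification (CQ), then with probability one the sequence (λ_N^{γ_N}) is bounded in C(Ξ;R)*. -/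
open MeasureTheory Filter Topology TopologicalSpace
open scoped ENNReal

noncomputable section

section Auxiliary

private lemma exists_bound_of_eventually (a : ℕ → ℝ)
    (h : ∃ N₀ C, ∀ N ≥ N₀, a N ≤ C) : ∃ C, ∀ N, a N ≤ C := by
  obtain ⟨N₀, C, hC⟩ := h
  refine ⟨max C ((Finset.range (N₀ + 1)).sup'
    (Finset.nonempty_range_iff.2 (Nat.succ_ne_zero _)) a), fun N => ?_⟩
  rcases le_or_gt N₀ N with h1 | h1
  · exact le_max_of_le_left (hC N h1)
  · exact le_max_of_le_right (Finset.le_sup' a (Finset.mem_range.2 (by omega)))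

/-- Gradient inequality for a convex differentiable function. -/
private lemma convex_grad_ineq {R : Type*} [NormedAddCommGroup R] [NormedSpace ℝ R]
    {β : R → ℝ} {Dβ : R → (R →L[ℝ] ℝ)}
    (hconv : ConvexOn ℝ Set.univ β) (hderiv : ∀ r, HasFDerivAt β (Dβ r) r)
    (x y : R) : Dβ x (y - x) ≤ β y - β x := by
  set g : ℝ → ℝ := fun t => β (t • (y - x) + x) with hgdef
  have hgc : ConvexOn ℝ Set.univ g := by
    have h := hconv.comp_affineMap (AffineMap.lineMap x y : ℝ →ᵃ[ℝ] R)
    have hfun : (β ∘ (AffineMap.lineMap x y : ℝ →ᵃ[ℝ] R)) = g := by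
      funext t
      simp [hgdef, Function.comp, AffineMap.lineMap_apply_module']
    have hs : (AffineMap.lineMap x y : ℝ →ᵃ[ℝ] R) ⁻¹' Set.univ = Set.univ :=
      Set.preimage_univ
    rw [hfun, hs] at h
    exact h
  have hline : HasDerivAt (fun t : ℝ => t • (y - x) + x) (y - x) 0 := by
    simpa using ((hasDerivAt_id (0 : ℝ)).smul_const (y - x)).add_const x
  have h0 : (0 : ℝ) • (y - x) + x = x := by simp
  have hl : HasFDerivAt β (Dβ x) ((0 : ℝ) • (y - x) + x) := by
    rw [h0]; exact hderiv x
  have hgd : HasDerivAt g ((Dβ x) (y - x)) 0 := by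
    rw [hgdef]
    exact HasFDerivAt.comp_hasDerivAt (f := fun t : ℝ => t • (y - x) + x)
      (x := (0 : ℝ)) hl hline
  have hslope := hgc.le_slope_of_hasDerivWithinAt_Ioi (Set.mem_univ (0 : ℝ))
    (Set.mem_univ (1 : ℝ)) one_pos hgd.hasDerivWithinAt
  rw [slope_def_field] at hslope
  have hg1 : g 1 = β y := by simp [hgdef]
  have hg0 : g 0 = β x := by simp [hgdef]
  rw [hg1, hg0] at hslope
  simpa using hslope

end Auxiliary


/-- Boundedness of the Moreau–Yosida SAA multipliers: for a convex,
continuously differentiable penalty `β` vanishing exactly on `K`, penalty parameters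
`γ_N → ∞`, and regularized SAA stationary points `(u_N^{γ_N}, λ_N^{γ_N})` whose controls
converge weakly* a.s. to a point satisfying the constraint qualification, the multipliers
`(λ_N^{γ_N})` are bounded in `C(Ξ;R)*` with probability one. -/
theorem regularized_SAA_multipliers_bounded_almost_surely {X W R R₀ Ξ Ω : Type*}
    [NormedAddCommGroup X] [NormedSpace ℝ X] [SeparableSpace X] [CompleteSpace X]
    [NormedAddCommGroup W] [NormedSpace ℝ W] [SeparableSpace W] [CompleteSpace W]
    [NormedAddCommGroup R] [NormedSpace ℝ R] [SeparableSpace R] [CompleteSpace R]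
    [NormedAddCommGroup R₀] [NormedSpace ℝ R₀] [SeparableSpace R₀] [CompleteSpace R₀]
    [MeasurableSpace R] [BorelSpace R] [MeasurableSpace R₀] [BorelSpace R₀]
    [MetricSpace Ξ] [CompactSpace Ξ] [SeparableSpace Ξ]
    [MeasurableSpace Ξ] [BorelSpace Ξ] [MeasurableSpace Ω]
    (S : StandingSetup X W R R₀ Ξ Ω) (A : Assumption3 S)
    (Gc : StrongDual ℝ X → ContinuousMap Ξ R)
    (hGc : ∀ u ∈ A.U₀, ∀ ξ : Ξ, Gc u ξ = S.G (S.B u) ξ)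
    (DGc : StrongDual ℝ X → StrongDual ℝ X → ContinuousMap Ξ R)
    (hDGc : ∀ u ∈ A.U₀, ∀ (h : StrongDual ℝ X) (ξ : Ξ),
      DGc u h ξ = A.DG (S.B u) ξ (S.B h))
    (β : R → ℝ) (hβ_nonneg : ∀ r, 0 ≤ β r) (hβ_convex : ConvexOn ℝ Set.univ β)
    (Dβ : R → (R →L[ℝ] ℝ)) (hβ_deriv : ∀ r, HasFDerivAt β (Dβ r) r)
    (hDβ_cont : Continuous Dβ) (hβ_zero : ∀ r, β r = 0 ↔ r ∈ S.K)
    (γ : ℕ → ℝ) (hγ_pos : ∀ N, 0 < γ N) (hγ : Tendsto γ atTop atTop)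
    (useq : ℕ → Ω → StrongDual ℝ X) (lam : ℕ → Ω → StrongDual ℝ (ContinuousMap Ξ R))
    (hlam : ∀ (N : ℕ) (ω : Ω) (v : ContinuousMap Ξ R), lam N ω v =
      ((N + 1 : ℕ) : ℝ)⁻¹ * ∑ i ∈ Finset.range (N + 1),
        γ (N + 1) * Dβ (S.G (S.B (useq N ω)) (S.samp i ω)) (v (S.samp i ω)))
    (hstat : ∀ (ω : Ω) (N : ℕ), ∃ η ∈ S.subdiff (useq N ω), ∀ h : StrongDual ℝ X,
      (((N + 1 : ℕ) : ℝ)⁻¹ * ∑ i ∈ Finset.range (N + 1),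
          A.DJ (S.B (useq N ω)) (S.samp i ω) (S.B h))
        + η h + lam N ω (DGc (useq N ω) h) = 0)
    (hint : (interior S.coneC).Nonempty)
    (ubar : StrongDual ℝ X) (hCQ : S.CQ Gc DGc ubar)
    (hconv : ∀ᵐ ω ∂S.P, WSTendsto (fun N => useq N ω) ubar)
 :
    ∀ᵐ ω ∂S.P, ∃ C : ℝ, ∀ N, ‖lam N ω‖ ≤ C := by
  classical
  haveI := S.hP
  -- basic facts about the cone and the penalty
  have h0K : (0 : R) ∈ S.K := by
    obtain ⟨r, hr⟩ := S.K_ne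
    simpa using S.K_cone 0 r le_rfl hr
  have hDβK : ∀ (r k : R), k ∈ S.K → Dβ r k ≤ 0 := by
    intro r k hk
    have key : ∀ t : ℝ, 0 < t → Dβ r k ≤ (Dβ r r - β r) / t := by
      intro t ht
      have h1 := convex_grad_ineq hβ_convex hβ_deriv r (t • k)
      have h2 : β (t • k) = 0 := (hβ_zero _).2 (S.K_cone t k ht.le hk)
      have h3 : (Dβ r) (t • k - r) = t * Dβ r k - Dβ r r := by
        rw [map_sub, _root_.map_smul]; simp
      rw [h2, h3] at h1
      rw [le_div_iff₀ ht]
      nlinarith [hβ_nonneg r]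
    have hlim : Tendsto (fun t : ℝ => (Dβ r r - β r) / t) atTop (𝓝 0) :=
      tendsto_const_nhds.div_atTop tendsto_id
    refine ge_of_tendsto hlim ?_
    filter_upwards [eventually_ge_atTop (1 : ℝ)] with t ht
    exact key t (by linarith)
  have hDβ_self : ∀ r : R, 0 ≤ Dβ r r := by
    intro r
    have h1 := convex_grad_ineq hβ_convex hβ_deriv r 0
    have h2 : β 0 = 0 := (hβ_zero _).2 h0K
    have h3 : (Dβ r) (0 - r) = -(Dβ r r) := by rw [zero_sub, map_neg]
    rw [h2, h3] at h1
    nlinarith [hβ_nonneg r]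
  -- a measurable version of L and the strong law of large numbers
  have hLsm := A.L_int.1
  set L' : Ξ → ℝ := hLsm.mk A.L with hL'def
  have hL'm : Measurable L' := hLsm.stronglyMeasurable_mk.measurable
  have hLL' : A.L =ᵐ[S.μ] L' := hLsm.ae_eq_mk
  set Xv : ℕ → Ω → ℝ := fun i ω => L' (S.samp i ω) with hXdef
  have hXint : Integrable (Xv 0) S.P := by
    have h1 : Integrable L' S.μ := A.L_int.congr hLL'
    rw [← S.samp_law 0] at h1
    exact (integrable_map_measure hL'm.stronglyMeasurable.aestronglyMeasurable
      (S.samp_meas 0).aemeasurable).1 h1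
  have hXindep : Pairwise (Function.onFun (ProbabilityTheory.IndepFun · · S.P) Xv) := by
    intro i j hij
    exact (S.samp_indep.indepFun hij).comp hL'm hL'm
  have hXident : ∀ i, ProbabilityTheory.IdentDistrib (Xv i) (Xv 0) S.P S.P := by
    intro i
    refine ⟨(hL'm.comp (S.samp_meas i)).aemeasurable,
      (hL'm.comp (S.samp_meas 0)).aemeasurable, ?_⟩
    show Measure.map (L' ∘ S.samp i) S.P = Measure.map (L' ∘ S.samp 0) S.P
    rw [← Measure.map_map hL'm (S.samp_meas i), ← Measure.map_map hL'm (S.samp_meas 0),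
      S.samp_law i, S.samp_law 0]
  have hSLLN := ProbabilityTheory.strong_law_ae_real Xv hXint hXindep hXident
  have hLae : ∀ᵐ ω ∂S.P, ∀ i, A.L (S.samp i ω) = L' (S.samp i ω) := by
    rw [ae_all_iff]
    intro i
    have h1 : ∀ᵐ ξ ∂S.μ, A.L ξ = L' ξ := hLL'
    rw [← S.samp_law i] at h1
    exact ae_of_ae_map (S.samp_meas i).aemeasurable h1
  -- main argument, pointwise on a full-measure set
  filter_upwards [hconv, hSLLN, hLae] with ω hω hS hLa
  -- domain facts
  have hdom : ∀ N, S.ψ (useq N ω) ≠ ⊤ := by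
    intro N
    obtain ⟨η, hη, -⟩ := hstat ω N
    exact hη.1
  have hUN₀ : ∀ N, useq N ω ∈ A.U₀ := fun N => A.dom_sub (hdom N)
  have hubardom : S.ψ ubar ≠ ⊤ := S.ψ_dom_closed _ _ hdom hω
  have hubar0 : ubar ∈ A.U₀ := A.dom_sub hubardom
  obtain ⟨uhat, huhatdom, hz⟩ := hCQ
  set z : ContinuousMap Ξ R := Gc ubar + DGc ubar (uhat - ubar) with hzdef
  have hB : Tendsto (fun N => S.B (useq N ω)) atTop (𝓝 (S.B ubar)) := S.B_wsc _ _ hω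
  -- the subtype of W on which G and DG are jointly continuous
  set Sset : Set W := S.B '' A.U₀ with hSsetdef
  have hmem : ∀ N, S.B (useq N ω) ∈ Sset := fun N => ⟨_, hUN₀ N, rfl⟩
  have hmembar : S.B ubar ∈ Sset := ⟨_, hubar0, rfl⟩
  have hGcont : Continuous (fun p : ↥Sset × Ξ => S.G (p.1 : W) p.2) := by
    have := A.G_jcont.comp_continuous
      (f := fun p : ↥Sset × Ξ => ((p.1 : W), p.2))
      ((continuous_subtype_val.comp continuous_fst).prodMk continuous_snd)
      (fun p => ⟨p.1.2, Set.mem_univ _⟩)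
    exact this
  have hDcont : Continuous (fun q : (↥Sset × W) × Ξ => A.DG (q.1.1 : W) q.2 q.1.2) := by
    have h1 : Continuous (fun q : (↥Sset × W) × Ξ => A.DG (q.1.1 : W) q.2) := by
      have := A.DG_jcont.comp_continuous
        (f := fun q : (↥Sset × W) × Ξ => ((q.1.1 : W), q.2))
        ((continuous_subtype_val.comp (continuous_fst.comp continuous_fst)).prodMk
          continuous_snd)
        (fun q => ⟨q.1.1.2, Set.mem_univ _⟩)
      exact this
    exact isBoundedBilinearMap_apply.continuous.comp
      (h1.prodMk (continuous_snd.comp continuous_fst))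
  set GG : C(↥Sset, C(Ξ, R)) := ContinuousMap.curry ⟨_, hGcont⟩ with hGGdef
  set DD : C(↥Sset × W, C(Ξ, R)) := ContinuousMap.curry ⟨_, hDcont⟩ with hDDdef
  have hGG : ∀ (u : StrongDual ℝ X) (hu : u ∈ A.U₀) (hm : S.B u ∈ Sset),
      GG ⟨S.B u, hm⟩ = Gc u := by
    intro u hu hm
    refine ContinuousMap.ext fun ξ => ?_
    rw [hGc u hu ξ]
    rfl
  have hDD : ∀ (u h : StrongDual ℝ X) (hu : u ∈ A.U₀) (hm : S.B u ∈ Sset),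
      DD (⟨S.B u, hm⟩, S.B h) = DGc u h := by
    intro u h hu hm
    refine ContinuousMap.ext fun ξ => ?_
    rw [hDGc u hu h ξ]
    rfl
  -- convergence of the linearized constraint maps
  have hsub : Tendsto (fun N => (⟨S.B (useq N ω), hmem N⟩ : ↥Sset)) atTop
      (𝓝 ⟨S.B ubar, hmembar⟩) := tendsto_subtype_rng.2 hB
  have hBh : Tendsto (fun N => S.B (uhat - useq N ω)) atTop (𝓝 (S.B (uhat - ubar))) := by
    simp only [map_sub]
    exact tendsto_const_nhds.sub hB
  have hzN : Tendsto (fun N => Gc (useq N ω) + DGc (useq N ω) (uhat - useq N ω))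
      atTop (𝓝 z) := by
    have h1 : Tendsto (fun N => GG ⟨S.B (useq N ω), hmem N⟩) atTop
        (𝓝 (GG ⟨S.B ubar, hmembar⟩)) := (GG.continuous.tendsto _).comp hsub
    have h2 : Tendsto (fun N => DD (⟨S.B (useq N ω), hmem N⟩, S.B (uhat - useq N ω)))
        atTop (𝓝 (DD (⟨S.B ubar, hmembar⟩, S.B (uhat - ubar)))) :=
      (DD.continuous.tendsto _).comp (hsub.prodMk_nhds hBh)
    have h3 := h1.add h2
    rw [hGG ubar hubar0 hmembar, hDD ubar (uhat - ubar) hubar0 hmembar] at h3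
    refine h3.congr fun N => ?_
    rw [hGG (useq N ω) (hUN₀ N) (hmem N), hDD (useq N ω) (uhat - useq N ω) (hUN₀ N) (hmem N)]
  -- the interior ball
  obtain ⟨ε, hε, hball⟩ := Metric.isOpen_iff.1 isOpen_interior z hz
  have hballC : Metric.ball z ε ⊆ S.coneC := hball.trans interior_subset
  -- sign properties of the multipliers
  have hlam_nonpos : ∀ (N : ℕ) (v : ContinuousMap Ξ R), v ∈ S.coneC → lam N ω v ≤ 0 := by
    intro N v hv
    rw [hlam]
    have hsum : (∑ i ∈ Finset.range (N + 1),
        γ (N + 1) * Dβ (S.G (S.B (useq N ω)) (S.samp i ω)) (v (S.samp i ω))) ≤ 0 :=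
      Finset.sum_nonpos fun i _ =>
        mul_nonpos_iff.2 (Or.inl ⟨(hγ_pos _).le, hDβK _ _ (hv (S.samp i ω))⟩)
    exact mul_nonpos_iff.2 (Or.inl ⟨inv_nonneg.2 (Nat.cast_nonneg _), hsum⟩)
  have hlam_G_nonneg : ∀ N : ℕ, 0 ≤ lam N ω (Gc (useq N ω)) := by
    intro N
    rw [hlam]
    refine mul_nonneg (inv_nonneg.2 (Nat.cast_nonneg _))
      (Finset.sum_nonneg fun i _ => mul_nonneg (hγ_pos _).le ?_)
    rw [hGc (useq N ω) (hUN₀ N)]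
    exact hDβ_self _
  -- the averaged Lipschitz bound
  set avgL : ℕ → ℝ := fun N => ((N + 1 : ℕ) : ℝ)⁻¹ *
      ∑ i ∈ Finset.range (N + 1), A.L (S.samp i ω) with havgLdef
  have havgL_nonneg : ∀ N, 0 ≤ avgL N := by
    intro N
    refine mul_nonneg (inv_nonneg.2 (Nat.cast_nonneg _)) (Finset.sum_nonneg fun i _ => ?_)
    exact le_trans (norm_nonneg (A.DJ (S.B (useq N ω)) (S.samp i ω)))
      (A.DJ_bound _ (A.BU₀_sub ⟨_, hUN₀ N, rfl⟩) _)
  have havgL_tendsto : Tendsto avgL atTop (𝓝 (∫ a, Xv 0 a ∂S.P)) := by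
    have h1 := hS.comp (tendsto_add_atTop_nat 1)
    refine h1.congr fun N => ?_
    show (∑ i ∈ Finset.range (N + 1), Xv i ω) / ((N + 1 : ℕ) : ℝ) = avgL N
    simp only [havgLdef]
    rw [inv_mul_eq_div]
    congr 1
    exact Finset.sum_congr rfl fun i _ => (hLa i).symm
  obtain ⟨ML, hML⟩ : ∃ M, ∀ᶠ N in atTop, avgL N ≤ M :=
    ⟨_, havgL_tendsto.eventually_le_const (lt_add_one _)⟩
  obtain ⟨MB, hMB⟩ : ∃ M, ∀ᶠ N in atTop, ‖S.B (uhat - useq N ω)‖ ≤ M :=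
    ⟨_, hBh.norm.eventually_le_const (lt_add_one _)⟩
  -- the stationarity bound on the linearized multiplier term
  have hDG_bound : ∀ N : ℕ, -(lam N ω (DGc (useq N ω) (uhat - useq N ω))) ≤
      avgL N * ‖S.B (uhat - useq N ω)‖ + (S.ψ uhat).toReal := by
    intro N
    obtain ⟨η, hη, heq⟩ := hstat ω N
    have h1 := heq (uhat - useq N ω)
    have hηb : η (uhat - useq N ω) ≤ (S.ψ uhat).toReal := by
      have h2 := hη.2 uhat huhatdom
      have h3 : 0 ≤ (S.ψ (useq N ω)).toReal := ENNReal.toReal_nonneg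
      linarith
    set c : ℝ := ((N + 1 : ℕ) : ℝ)⁻¹ with hcdef
    have hc : 0 ≤ c := inv_nonneg.2 (Nat.cast_nonneg _)
    set s : ℝ := ∑ i ∈ Finset.range (N + 1),
      A.DJ (S.B (useq N ω)) (S.samp i ω) (S.B (uhat - useq N ω)) with hsdef
    have havgDJ : |c * s| ≤ avgL N * ‖S.B (uhat - useq N ω)‖ := by
      have hW₀ : S.B (useq N ω) ∈ A.W₀ := A.BU₀_sub ⟨_, hUN₀ N, rfl⟩
      calc |c * s| = c * |s| := by rw [abs_mul, abs_of_nonneg hc]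
        _ ≤ c * ∑ i ∈ Finset.range (N + 1),
            |A.DJ (S.B (useq N ω)) (S.samp i ω) (S.B (uhat - useq N ω))| :=
          mul_le_mul_of_nonneg_left (Finset.abs_sum_le_sum_abs _ _) hc
        _ ≤ c * ∑ i ∈ Finset.range (N + 1),
            A.L (S.samp i ω) * ‖S.B (uhat - useq N ω)‖ := by
          refine mul_le_mul_of_nonneg_left (Finset.sum_le_sum fun i _ => ?_) hc
          have hop := (A.DJ (S.B (useq N ω)) (S.samp i ω)).le_opNorm
            (S.B (uhat - useq N ω))
          have hLb := A.DJ_bound _ hW₀ (S.samp i ω)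
          calc |A.DJ (S.B (useq N ω)) (S.samp i ω) (S.B (uhat - useq N ω))|
              = ‖A.DJ (S.B (useq N ω)) (S.samp i ω) (S.B (uhat - useq N ω))‖ :=
              (Real.norm_eq_abs _).symm
            _ ≤ ‖A.DJ (S.B (useq N ω)) (S.samp i ω)‖ * ‖S.B (uhat - useq N ω)‖ := hop
            _ ≤ A.L (S.samp i ω) * ‖S.B (uhat - useq N ω)‖ :=
              mul_le_mul_of_nonneg_right hLb (norm_nonneg _)
        _ = avgL N * ‖S.B (uhat - useq N ω)‖ := by
          rw [← Finset.sum_mul, havgLdef]; ring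
    have h4 : c * s ≤ |c * s| := le_abs_self _
    linarith
  -- eventual membership of perturbed linearizations in the cone
  have hzball : ∀ᶠ N in atTop, ∀ v : ContinuousMap Ξ R, ‖v‖ ≤ ε / 4 →
      (Gc (useq N ω) + DGc (useq N ω) (uhat - useq N ω) + v) ∈ S.coneC := by
    filter_upwards [hzN.eventually (Metric.ball_mem_nhds z
      (by positivity : (0 : ℝ) < ε / 2))] with N hN v hv
    apply hballC
    have hN' : ‖Gc (useq N ω) + DGc (useq N ω) (uhat - useq N ω) - z‖ < ε / 2 := by
      rw [← dist_eq_norm]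
      exact Metric.mem_ball.1 hN
    refine Metric.mem_ball.2 ?_
    rw [dist_eq_norm]
    have heq : Gc (useq N ω) + DGc (useq N ω) (uhat - useq N ω) + v - z =
        (Gc (useq N ω) + DGc (useq N ω) (uhat - useq N ω) - z) + v := by abel
    rw [heq]
    calc ‖(Gc (useq N ω) + DGc (useq N ω) (uhat - useq N ω) - z) + v‖ ≤
        ‖Gc (useq N ω) + DGc (useq N ω) (uhat - useq N ω) - z‖ + ‖v‖ := norm_add_le _ _
      _ < ε / 2 + ε / 4 := by exact add_lt_add_of_lt_of_le hN' hv
      _ < ε := by linarith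
  -- final assembly
  refine exists_bound_of_eventually _ ?_
  have hev := (hML.and hMB).and hzball
  rw [eventually_atTop] at hev
  obtain ⟨N₀, hN₀⟩ := hev
  refine ⟨N₀, 4 / ε * (ML * MB + (S.ψ uhat).toReal), fun N hN => ?_⟩
  obtain ⟨⟨hML', hMB'⟩, hcone⟩ := hN₀ N hN
  have hML0 : 0 ≤ ML := le_trans (havgL_nonneg N) hML'
  have hMB0 : 0 ≤ MB := le_trans (norm_nonneg _) hMB'
  set C₁ : ℝ := ML * MB + (S.ψ uhat).toReal with hC₁def
  have hC₁0 : 0 ≤ C₁ := add_nonneg (mul_nonneg hML0 hMB0) ENNReal.toReal_nonneg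
  have hbnd : avgL N * ‖S.B (uhat - useq N ω)‖ + (S.ψ uhat).toReal ≤ C₁ := by
    have := mul_le_mul hML' hMB' (norm_nonneg _) hML0
    linarith
  have hv_le : ∀ v : ContinuousMap Ξ R, ‖v‖ ≤ ε / 4 → lam N ω v ≤ C₁ := by
    intro v hv
    have h1 : lam N ω (Gc (useq N ω) + DGc (useq N ω) (uhat - useq N ω) + v) ≤ 0 :=
      hlam_nonpos N _ (hcone v hv)
    rw [map_add, map_add] at h1
    have h2 := hlam_G_nonneg N
    have h3 := hDG_bound N
    linarith
  have habs : ∀ v : ContinuousMap Ξ R, ‖v‖ ≤ ε / 4 → |lam N ω v| ≤ C₁ := by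
    intro v hv
    refine abs_le.2 ⟨?_, hv_le v hv⟩
    have h1 := hv_le (-v) (by rwa [norm_neg])
    rw [map_neg] at h1
    linarith
  refine ContinuousLinearMap.opNorm_le_bound _
    (mul_nonneg (by positivity) hC₁0) fun v => ?_
  rcases eq_or_ne v 0 with rfl | hv0
  · simp
  · have hvn : (0 : ℝ) < ‖v‖ := norm_pos_iff.2 hv0
    set c : ℝ := (ε / 4) / ‖v‖ with hcdef
    have hc : 0 < c := by positivity
    have hwnorm : ‖c • v‖ = ε / 4 := by
      rw [norm_smul, Real.norm_eq_abs, abs_of_pos hc, hcdef, div_mul_cancel₀ _ hvn.ne']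
    have h1 := habs (c • v) (le_of_eq hwnorm)
    rw [_root_.map_smul, smul_eq_mul, abs_mul, abs_of_pos hc] at h1
    rw [Real.norm_eq_abs]
    rw [hcdef, div_mul_eq_mul_div, div_le_iff₀ hvn] at h1
    have hεne : (ε : ℝ) ≠ 0 := ne_of_gt hε
    have hstep : 4 / ε * (ε / 4 * |lam N ω v|) ≤ 4 / ε * (C₁ * ‖v‖) :=
      mul_le_mul_of_nonneg_left h1 (by positivity)
    have hfe : 4 / ε * (ε / 4 * |lam N ω v|) = |lam N ω v| := by
      field_simp
    have hrw : 4 / ε * (C₁ * ‖v‖) = 4 / ε * C₁ * ‖v‖ := by ring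
    linarith
end
end
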